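/- Let C and D be finitely based permutation classes. Then the 2×2 grid class Grid(C,D; Av(12),Av(21)), whose top row is (C, D), whose bottom-left cell is decreasing and whose bottom-right cell is increasing, is finitely based. -/

import Mathlib

/-- A permutation of length `n`, given as a bijection of `Fin n`
(index/value `i` represents the entry `i+1` of `{1,…,n}`). -/
abbrev Perm' := Σ n : ℕ, Equiv.Perm (Fin n)

/-- `Contains σ π` means the pattern `σ` is contained in `π`. -/
def Contains (σ π : Perm') : Prop :=
  ∃ f : Fin σ.1 → Fin π.1, StrictMono f ∧
    ∀ i j : Fin σ.1, σ.2 i < σ.2 j ↔ π.2 (f i) < π.2 (f j)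

/-- A permutation class: a downward-closed set of permutations. -/
def IsPermClass (X : Set Perm') : Prop :=
  ∀ π ∈ X, ∀ σ : Perm', Contains σ π → σ ∈ X

/-- The avoidance set of a set `B` of permutations. -/
def Av (B : Set Perm') : Set Perm' := {π | ∀ β ∈ B, ¬ Contains β π}

/-- A set of permutations is finitely based if it is `Av B` for a finite `B`. -/
def FinitelyBased (X : Set Perm') : Prop := ∃ B : Set Perm', B.Finite ∧ X = Av B

/-- `PatternOn π S σ`: the entries of `π` at the set `S` of indices form a copy of `σ`. -/
def PatternOn (π : Perm') (S : Set (Fin π.1)) (σ : Perm') : Prop :=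
  ∃ f : Fin σ.1 → Fin π.1, StrictMono f ∧ Set.range f = S ∧
    ∀ i j : Fin σ.1, σ.2 i < σ.2 j ↔ π.2 (f i) < π.2 (f j)

/-- `PatternIn π S X`: the pattern of the entries of `π` at positions `S` lies in `X`. -/
def PatternIn (π : Perm') (S : Set (Fin π.1)) (X : Set Perm') : Prop :=
  ∃ σ ∈ X, PatternOn π S σ

/-- The permutation 21. -/
def perm21 : Perm' := ⟨2, Equiv.swap 0 1⟩
/-- The permutation 12. -/
def perm12 : Perm' := ⟨2, Equiv.refl (Fin 2)⟩
/-- The empty permutation. -/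
def emptyPerm : Perm' := ⟨0, Equiv.refl (Fin 0)⟩

/-- The 2×2 grid class `Grid(A,B;C,D)`: `A` top-left, `B` top-right, `C` bottom-left,
`D` bottom-right.  A position `i : Fin n` represents position `i+1`, so "position `≤ v`"
is `(i:ℕ) < v`, and "value `> h`" is `h ≤ (π.2 i : ℕ)`. -/
def GridClass (A B C D : Set Perm') : Set Perm' :=
  {π | ∃ v h : ℕ, v ≤ π.1 ∧ h ≤ π.1 ∧
    PatternIn π {i | (i : ℕ) < v ∧ h ≤ (π.2 i : ℕ)} A ∧
    PatternIn π {i | v ≤ (i : ℕ) ∧ h ≤ (π.2 i : ℕ)} B ∧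
    PatternIn π {i | (i : ℕ) < v ∧ (π.2 i : ℕ) < h} C ∧
    PatternIn π {i | v ≤ (i : ℕ) ∧ (π.2 i : ℕ) < h} D}

/-- Horizontal juxtaposition of `X` (left) and `Y` (right). -/
def HJuxt (X Y : Set Perm') : Set Perm' :=
  {π | ∃ v : ℕ, v ≤ π.1 ∧
    PatternIn π {i | (i : ℕ) < v} X ∧
    PatternIn π {i | v ≤ (i : ℕ)} Y}

/-- Vertical juxtaposition of `X` (top) and `Y` (bottom). -/
def VJuxt (X Y : Set Perm') : Set Perm' :=
  {π | ∃ h : ℕ, h ≤ π.1 ∧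
    PatternIn π {i | h ≤ (π.2 i : ℕ)} X ∧
    PatternIn π {i | (π.2 i : ℕ) < h} Y}

/-- `Squint≤(A,B;C,D)`: divisions `(v, ℓ, r)` with the left h-line `ℓ` no higher
than the right h-line `r`. -/
def SquintLE (A B C D : Set Perm') : Set Perm' :=
  {π | ∃ v l r : ℕ, v ≤ π.1 ∧ l ≤ π.1 ∧ r ≤ π.1 ∧ l ≤ r ∧
    PatternIn π {i | (i : ℕ) < v ∧ l ≤ (π.2 i : ℕ)} A ∧
    PatternIn π {i | (i : ℕ) < v ∧ (π.2 i : ℕ) < l} C ∧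
    PatternIn π {i | v ≤ (i : ℕ) ∧ r ≤ (π.2 i : ℕ)} B ∧
    PatternIn π {i | v ≤ (i : ℕ) ∧ (π.2 i : ℕ) < r} D}

/-- `Squint≥(A,B;C,D)`: divisions `(v, ℓ, r)` with the left h-line `ℓ` no lower
than the right h-line `r`. -/
def SquintGE (A B C D : Set Perm') : Set Perm' :=
  {π | ∃ v l r : ℕ, v ≤ π.1 ∧ l ≤ π.1 ∧ r ≤ π.1 ∧ r ≤ l ∧
    PatternIn π {i | (i : ℕ) < v ∧ l ≤ (π.2 i : ℕ)} A ∧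
    PatternIn π {i | (i : ℕ) < v ∧ (π.2 i : ℕ) < l} C ∧
    PatternIn π {i | v ≤ (i : ℕ) ∧ r ≤ (π.2 i : ℕ)} B ∧
    PatternIn π {i | v ≤ (i : ℕ) ∧ (π.2 i : ℕ) < r} D}

/-- The basis of a set `X`: minimal permutations not in `X`. -/
def PermBasis (X : Set Perm') : Set Perm' :=
  {π | π ∉ X ∧ ∀ σ : Perm', Contains σ π → σ ≠ π → σ ∈ X}


section Machinery
open Set

lemma contains_rfl (π : Perm') : Contains π π :=
  ⟨id, strictMono_id, fun _ _ => Iff.rfl⟩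

lemma contains_trans {a b c : Perm'} (h1 : Contains a b) (h2 : Contains b c) : Contains a c := by
  obtain ⟨f, hf, hfi⟩ := h1
  obtain ⟨g, hg, hgi⟩ := h2
  exact ⟨g ∘ f, hg.comp hf, fun i j => (hfi i j).trans (hgi (f i) (f j))⟩

lemma contains_empty (π : Perm') : Contains emptyPerm π :=
  ⟨fun i => i.elim0, fun i => i.elim0, fun i => i.elim0⟩

lemma isPermClass_av (B : Set Perm') : IsPermClass (Av B) := by
  intro π hπ σ hσ β hβ hc
  exact hπ β hβ (contains_trans hc hσ)

open scoped Classical in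
lemma exists_patternOn (π : Perm') (S : Set (Fin π.1)) :
    ∃ σ : Perm', σ.1 = S.toFinset.card ∧ PatternOn π S σ := by
  classical
  set s : Finset (Fin π.1) := S.toFinset with hs
  set k := s.card with hk
  let e1 : Fin k ≃o {x // x ∈ s} := s.orderIsoOfFin rfl
  have hcard : (s.image π.2).card = k := by
    rw [Finset.card_image_of_injective _ π.2.injective]
  let e2 : Fin k ≃o {x // x ∈ s.image π.2} := (s.image π.2).orderIsoOfFin hcard
  have hmem : ∀ i : Fin k, π.2 (e1 i) ∈ s.image π.2 := fun i =>
    Finset.mem_image_of_mem _ (e1 i).2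
  set g : Fin k → Fin k := fun i => e2.symm ⟨π.2 (e1 i), hmem i⟩ with hg
  have hginj : Function.Injective g := by
    intro i j hij
    have h2 : (⟨π.2 (e1 i), hmem i⟩ : {x // x ∈ s.image π.2}) = ⟨π.2 (e1 j), hmem j⟩ :=
      e2.symm.injective hij
    have h3 : π.2 (e1 i) = π.2 (e1 j) := congrArg Subtype.val h2
    exact e1.injective (Subtype.ext (π.2.injective h3))
  have hgbij : Function.Bijective g := Finite.injective_iff_bijective.mp hginj
  refine ⟨⟨k, Equiv.ofBijective g hgbij⟩, rfl, fun i => (e1 i : Fin π.1), ?_, ?_, ?_⟩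
  · intro i j hij
    exact Subtype.coe_lt_coe.mpr (e1.strictMono hij)
  · ext x
    constructor
    · rintro ⟨i, rfl⟩
      exact Set.mem_toFinset.mp (e1 i).2
    · intro hx
      exact ⟨e1.symm ⟨x, Set.mem_toFinset.mpr hx⟩, by simp⟩
  · intro i j
    exact (OrderIso.lt_iff_lt e2.symm).trans Subtype.mk_lt_mk

lemma patternIn_mono {π ρ : Perm'} {f : Fin ρ.1 → Fin π.1} (hf : StrictMono f)
    (hiso : ∀ i j, ρ.2 i < ρ.2 j ↔ π.2 (f i) < π.2 (f j))
    {T : Set (Fin ρ.1)} {S : Set (Fin π.1)} (hTS : ∀ i ∈ T, f i ∈ S)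
    {X : Set Perm'} (hX : IsPermClass X) (h : PatternIn π S X) : PatternIn ρ T X := by
  classical
  obtain ⟨τ, hτX, e, hemono, herange, heiso⟩ := h
  obtain ⟨τ', -, e', hemono', herange', heiso'⟩ := exists_patternOn ρ T
  have hmemT : ∀ i, e' i ∈ T := fun i => herange' ▸ Set.mem_range_self i
  have hfe : ∀ i : Fin τ'.1, f (e' i) ∈ Set.range e := by
    intro i; rw [herange]; exact hTS _ (hmemT i)
  set h' : Fin τ'.1 → Fin τ.1 := fun i => (hfe i).choose with hh'
  have hkey : ∀ i, e (h' i) = f (e' i) := fun i => (hfe i).choose_spec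
  have hmono' : StrictMono h' := by
    intro i j hij
    have : e (h' i) < e (h' j) := by rw [hkey, hkey]; exact hf (hemono' hij)
    exact hemono.lt_iff_lt.mp this
  have hcon : Contains τ' τ := by
    refine ⟨h', hmono', fun i j => ?_⟩
    have h4 : π.2 (f (e' i)) < π.2 (f (e' j)) ↔ τ.2 (h' i) < τ.2 (h' j) := by
      rw [← hkey i, ← hkey j]; exact (heiso _ _).symm
    exact (heiso' i j).trans ((hiso _ _).trans h4)
  exact ⟨τ', hX τ hτX τ' hcon, e', hemono', herange', heiso'⟩

lemma patternIn_subset {π : Perm'} {T S : Set (Fin π.1)} (hTS : T ⊆ S)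
    {X : Set Perm'} (hX : IsPermClass X) (h : PatternIn π S X) : PatternIn π T X :=
  patternIn_mono strictMono_id (fun _ _ => Iff.rfl) (fun i hi => hTS hi) hX h

lemma patternIn_image {π ρ : Perm'} {f : Fin ρ.1 → Fin π.1} (hf : StrictMono f)
    (hiso : ∀ i j, ρ.2 i < ρ.2 j ↔ π.2 (f i) < π.2 (f j))
    {T : Set (Fin ρ.1)} {X : Set Perm'} (h : PatternIn ρ T X) :
    PatternIn π (f '' T) X := by
  obtain ⟨σ, hσX, e, hm, hr, hi⟩ := h
  refine ⟨σ, hσX, f ∘ e, hf.comp hm, ?_, fun i j => (hi i j).trans (hiso _ _)⟩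
  rw [Set.range_comp, hr]

lemma patternIn_empty {π : Perm'} {S : Set (Fin π.1)} (hS : S = ∅) {X : Set Perm'}
    (hX : emptyPerm ∈ X) : PatternIn π S X := by
  refine ⟨emptyPerm, hX, fun i => i.elim0, fun i => i.elim0, ?_, fun i => i.elim0⟩
  rw [hS]
  haveI : IsEmpty (Fin emptyPerm.1) := inferInstanceAs (IsEmpty (Fin 0))
  exact Set.range_eq_empty _

/-- A copy of `β` inside the point set `S` of `π`. -/
def CopyOn (π β : Perm') (S : Set (Fin π.1)) : Prop :=
  ∃ g : Fin β.1 → Fin π.1, StrictMono g ∧ (∀ i, g i ∈ S) ∧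
    ∀ i j, β.2 i < β.2 j ↔ π.2 (g i) < π.2 (g j)

lemma CopyOn.mono {π β : Perm'} {S S' : Set (Fin π.1)} (h : CopyOn π β S) (hs : S ⊆ S') :
    CopyOn π β S' :=
  let ⟨g, h1, h2, h3⟩ := h; ⟨g, h1, fun i => hs (h2 i), h3⟩

lemma copyOn_of_not_patternIn {π : Perm'} {S : Set (Fin π.1)} {B : Set Perm'}
    (h : ¬ PatternIn π S (Av B)) : ∃ β ∈ B, CopyOn π β S := by
  obtain ⟨σ, -, e, hm, hr, hi⟩ := exists_patternOn π S
  have hσ : σ ∉ Av B := fun hmem => h ⟨σ, hmem, e, hm, hr, hi⟩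
  simp only [Av, Set.mem_setOf_eq, not_forall] at hσ
  obtain ⟨β, hβ, hc⟩ := hσ
  rw [not_not] at hc
  obtain ⟨g, gm, gi⟩ := hc
  exact ⟨β, hβ, e ∘ g, hm.comp gm, fun i => hr ▸ Set.mem_range_self _,
    fun i j => (gi i j).trans (hi _ _)⟩

lemma not_patternIn_of_copyOn {π β : Perm'} {S : Set (Fin π.1)} {B : Set Perm'}
    (hβ : β ∈ B) (hc : CopyOn π β S) : ¬ PatternIn π S (Av B) := by
  rintro ⟨σ, hσAv, e, hm, hr, hi⟩
  obtain ⟨g, gm, gmem, gi⟩ := hc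
  have hge : ∀ i, g i ∈ Set.range e := fun i => hr ▸ gmem i
  set h' : Fin β.1 → Fin σ.1 := fun i => (hge i).choose with hh'
  have hkey : ∀ i, e (h' i) = g i := fun i => (hge i).choose_spec
  have hmono : StrictMono h' := by
    intro i j hij
    exact hm.lt_iff_lt.mp (by rw [hkey, hkey]; exact gm hij)
  have hcon : Contains β σ := by
    refine ⟨h', hmono, fun i j => ?_⟩
    refine (gi i j).trans ?_
    rw [← hkey i, ← hkey j]
    exact (hi _ _).symm
  exact hσAv β hβ hcon

/-- The points of `S` are decreasing in `π`. -/
def DecOn (π : Perm') (S : Set (Fin π.1)) : Prop :=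
  ∀ i j : Fin π.1, i ∈ S → j ∈ S → i < j → π.2 j < π.2 i

/-- The points of `S` are increasing in `π`. -/
def IncOn (π : Perm') (S : Set (Fin π.1)) : Prop :=
  ∀ i j : Fin π.1, i ∈ S → j ∈ S → i < j → π.2 i < π.2 j

lemma fin2_lt_cases {a b : Fin 2} (hab : a < b) : a = 0 ∧ b = 1 := by
  constructor <;> (apply Fin.ext; omega)

lemma contains_perm12_of {σ : Perm'} {i j : Fin σ.1} (hij : i < j) (hv : σ.2 i < σ.2 j) :
    Contains perm12 σ := by
  have hmono : StrictMono (![i, j] : Fin 2 → Fin σ.1) := by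
    intro a b hab
    obtain ⟨rfl, rfl⟩ := fin2_lt_cases hab
    simpa using hij
  have key : ∀ a b : Fin 2, (Equiv.refl (Fin 2)) a < (Equiv.refl (Fin 2)) b ↔
      σ.2 (![i,j] a) < σ.2 (![i,j] b) := by
    intro a b
    fin_cases a <;> fin_cases b
    · exact iff_of_false (lt_irrefl _) (lt_irrefl _)
    · exact iff_of_true (by decide) hv
    · exact iff_of_false (by decide) (lt_asymm hv)
    · exact iff_of_false (lt_irrefl _) (lt_irrefl _)
  exact ⟨![i,j], hmono, key⟩

lemma contains_perm21_of {σ : Perm'} {i j : Fin σ.1} (hij : i < j) (hv : σ.2 j < σ.2 i) :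
    Contains perm21 σ := by
  have hmono : StrictMono (![i, j] : Fin 2 → Fin σ.1) := by
    intro a b hab
    obtain ⟨rfl, rfl⟩ := fin2_lt_cases hab
    simpa using hij
  have key : ∀ a b : Fin 2, (Equiv.swap 0 1) a < (Equiv.swap 0 1) b ↔
      σ.2 (![i,j] a) < σ.2 (![i,j] b) := by
    intro a b
    fin_cases a <;> fin_cases b
    · exact iff_of_false (lt_irrefl _) (lt_irrefl _)
    · exact iff_of_false (by decide) (lt_asymm hv)
    · exact iff_of_true (by decide) hv
    · exact iff_of_false (lt_irrefl _) (lt_irrefl _)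
  exact ⟨![i,j], hmono, key⟩

lemma exists_of_contains_perm12 {σ : Perm'} (hc : Contains perm12 σ) :
    ∃ x y : Fin σ.1, x < y ∧ σ.2 x < σ.2 y := by
  have hc' : Contains (⟨2, Equiv.refl (Fin 2)⟩ : Perm') σ := hc
  obtain ⟨g, gm, gi⟩ := hc'
  exact ⟨g (0:Fin 2), g (1:Fin 2), gm (by decide : ((0:Fin 2) < (1:Fin 2))),
    (gi (0:Fin 2) (1:Fin 2)).mp (by decide)⟩

lemma exists_of_contains_perm21 {σ : Perm'} (hc : Contains perm21 σ) :
    ∃ x y : Fin σ.1, x < y ∧ σ.2 y < σ.2 x := by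
  have hc' : Contains (⟨2, Equiv.swap 0 1⟩ : Perm') σ := hc
  obtain ⟨g, gm, gi⟩ := hc'
  exact ⟨g (0:Fin 2), g (1:Fin 2), gm (by decide : ((0:Fin 2) < (1:Fin 2))),
    (gi (1:Fin 2) (0:Fin 2)).mp (by decide)⟩

lemma patternIn_av12_iff {π : Perm'} {S : Set (Fin π.1)} :
    PatternIn π S (Av {perm12}) ↔ DecOn π S := by
  constructor
  · rintro ⟨σ, hσ, e, hm, hr, hi⟩ i j hiS hjS hij
    rw [← hr] at hiS hjS
    obtain ⟨i', rfl⟩ := hiS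
    obtain ⟨j', rfl⟩ := hjS
    have hij' : i' < j' := hm.lt_iff_lt.mp hij
    rcases lt_trichotomy (π.2 (e j')) (π.2 (e i')) with h | h | h
    · exact h
    · exact absurd (hm.injective (π.2.injective h)) (Ne.symm (ne_of_lt hij'))
    · exact absurd (contains_perm12_of hij' ((hi i' j').mpr h)) (hσ perm12 rfl)
  · intro hdec
    obtain ⟨σ, -, e, hm, hr, hi⟩ := exists_patternOn π S
    refine ⟨σ, ?_, e, hm, hr, hi⟩
    intro β hβ hc
    rw [Set.mem_singleton_iff] at hβ
    subst hβ
    obtain ⟨x, y, hxy, hv⟩ := exists_of_contains_perm12 hc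
    have hπv : π.2 (e x) < π.2 (e y) := (hi _ _).mp hv
    have hmem : ∀ z, e z ∈ S := fun z => hr ▸ Set.mem_range_self z
    exact absurd (hdec _ _ (hmem _) (hmem _) (hm hxy)) (lt_asymm hπv)

lemma patternIn_av21_iff {π : Perm'} {S : Set (Fin π.1)} :
    PatternIn π S (Av {perm21}) ↔ IncOn π S := by
  constructor
  · rintro ⟨σ, hσ, e, hm, hr, hi⟩ i j hiS hjS hij
    rw [← hr] at hiS hjS
    obtain ⟨i', rfl⟩ := hiS
    obtain ⟨j', rfl⟩ := hjS
    have hij' : i' < j' := hm.lt_iff_lt.mp hij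
    rcases lt_trichotomy (π.2 (e i')) (π.2 (e j')) with h | h | h
    · exact h
    · exact absurd (hm.injective (π.2.injective h)) (ne_of_lt hij')
    · exact absurd (contains_perm21_of hij' ((hi j' i').mpr h)) (hσ perm21 rfl)
  · intro hinc
    obtain ⟨σ, -, e, hm, hr, hi⟩ := exists_patternOn π S
    refine ⟨σ, ?_, e, hm, hr, hi⟩
    intro β hβ hc
    rw [Set.mem_singleton_iff] at hβ
    subst hβ
    obtain ⟨x, y, hxy, hv⟩ := exists_of_contains_perm21 hc
    have hπv : π.2 (e y) < π.2 (e x) := (hi _ _).mp hv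
    have hmem : ∀ z, e z ∈ S := fun z => hr ▸ Set.mem_range_self z
    exact absurd (hinc _ _ (hmem _) (hmem _) (hm hxy)) (lt_asymm hπv)

lemma decOn_image {π ρ : Perm'} {f : Fin ρ.1 → Fin π.1} (hf : StrictMono f)
    (hiso : ∀ i j, ρ.2 i < ρ.2 j ↔ π.2 (f i) < π.2 (f j))
    {T : Set (Fin ρ.1)} (h : DecOn ρ T) : DecOn π (f '' T) := by
  rintro x y ⟨i, hiT, rfl⟩ ⟨j, hjT, rfl⟩ hxy
  exact (hiso j i).mp (h i j hiT hjT (hf.lt_iff_lt.mp hxy))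

lemma incOn_image {π ρ : Perm'} {f : Fin ρ.1 → Fin π.1} (hf : StrictMono f)
    (hiso : ∀ i j, ρ.2 i < ρ.2 j ↔ π.2 (f i) < π.2 (f j))
    {T : Set (Fin ρ.1)} (h : IncOn ρ T) : IncOn π (f '' T) := by
  rintro x y ⟨i, hiT, rfl⟩ ⟨j, hjT, rfl⟩ hxy
  exact (hiso i j).mp (h i j hiT hjT (hf.lt_iff_lt.mp hxy))

end Machinery

section Numeric
open Set

/-- Top-left cell condition. -/
def TLok (π : Perm') (C : Set Perm') (v l : ℕ) : Prop :=
  PatternIn π {i | (i : ℕ) < v ∧ l ≤ (π.2 i : ℕ)} C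

/-- Bottom-left cell decreasing. -/
def BLdec (π : Perm') (v l : ℕ) : Prop :=
  DecOn π {i | (i : ℕ) < v ∧ (π.2 i : ℕ) < l}

/-- Top-right cell condition. -/
def TRok (π : Perm') (D : Set Perm') (v r : ℕ) : Prop :=
  PatternIn π {i | v ≤ (i : ℕ) ∧ r ≤ (π.2 i : ℕ)} D

/-- Bottom-right cell increasing. -/
def BRinc (π : Perm') (v r : ℕ) : Prop :=
  IncOn π {i | v ≤ (i : ℕ) ∧ (π.2 i : ℕ) < r}

noncomputable def tL (π : Perm') (C : Set Perm') (v : ℕ) : ℕ := sInf {l | TLok π C v l}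
noncomputable def hLn (π : Perm') (v : ℕ) : ℕ := sSup {h | h ≤ π.1 ∧ BLdec π v h}
noncomputable def tR (π : Perm') (D : Set Perm') (v : ℕ) : ℕ := sInf {r | TRok π D v r}
noncomputable def hRn (π : Perm') (v : ℕ) : ℕ := sSup {h | h ≤ π.1 ∧ BRinc π v h}

variable {π : Perm'} {C D : Set Perm'}

lemma TLok_top (hCe : emptyPerm ∈ C) (v : ℕ) : TLok π C v π.1 := by
  apply patternIn_empty _ hCe
  apply Set.eq_empty_iff_forall_notMem.mpr
  intro i hi
  exact absurd hi.2 (Nat.not_le.mpr (π.2 i).isLt)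

lemma TLok_of_le (hC : IsPermClass C) {v l l' : ℕ} (h : TLok π C v l) (hll : l ≤ l') :
    TLok π C v l' := by
  refine patternIn_subset ?_ hC h
  intro i hi
  exact ⟨hi.1, le_trans hll hi.2⟩

lemma TLok_anti_v (hC : IsPermClass C) {v v' l : ℕ} (h : TLok π C v' l) (hv : v ≤ v') :
    TLok π C v l := by
  refine patternIn_subset ?_ hC h
  intro i hi
  exact ⟨lt_of_lt_of_le hi.1 hv, hi.2⟩

lemma tL_le {v l : ℕ} (h : TLok π C v l) : tL π C v ≤ l := Nat.sInf_le h

lemma tL_le_top (hCe : emptyPerm ∈ C) (v : ℕ) : tL π C v ≤ π.1 := tL_le (TLok_top (π := π) hCe v)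

lemma TLok_tL (hCe : emptyPerm ∈ C) (v : ℕ) : TLok π C v (tL π C v) :=
  Nat.sInf_mem (s := {l | TLok π C v l}) ⟨π.1, TLok_top (π := π) hCe v⟩

lemma not_TLok_of_lt {v l : ℕ} (h : l < tL π C v) : ¬ TLok π C v l :=
  Nat.notMem_of_lt_sInf h

lemma tL_mono (hC : IsPermClass C) (hCe : emptyPerm ∈ C) {v v' : ℕ} (hv : v ≤ v') :
    tL π C v ≤ tL π C v' :=
  tL_le (TLok_anti_v hC (TLok_tL hCe v') hv)

lemma TRok_top (hDe : emptyPerm ∈ D) (v : ℕ) : TRok π D v π.1 := by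
  apply patternIn_empty _ hDe
  apply Set.eq_empty_iff_forall_notMem.mpr
  intro i hi
  exact absurd hi.2 (Nat.not_le.mpr (π.2 i).isLt)

lemma TRok_of_le (hD : IsPermClass D) {v r r' : ℕ} (h : TRok π D v r) (hrr : r ≤ r') :
    TRok π D v r' := by
  refine patternIn_subset ?_ hD h
  intro i hi
  exact ⟨hi.1, le_trans hrr hi.2⟩

lemma TRok_mono_v (hD : IsPermClass D) {v v' r : ℕ} (h : TRok π D v r) (hv : v ≤ v') :
    TRok π D v' r := by
  refine patternIn_subset ?_ hD h
  intro i hi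
  exact ⟨le_trans hv hi.1, hi.2⟩

lemma tR_le {v r : ℕ} (h : TRok π D v r) : tR π D v ≤ r := Nat.sInf_le h

lemma tR_le_top (hDe : emptyPerm ∈ D) (v : ℕ) : tR π D v ≤ π.1 := tR_le (TRok_top (π := π) hDe v)

lemma TRok_tR (hDe : emptyPerm ∈ D) (v : ℕ) : TRok π D v (tR π D v) :=
  Nat.sInf_mem (s := {r | TRok π D v r}) ⟨π.1, TRok_top (π := π) hDe v⟩

lemma not_TRok_of_lt {v r : ℕ} (h : r < tR π D v) : ¬ TRok π D v r :=
  Nat.notMem_of_lt_sInf h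

lemma tR_anti (hD : IsPermClass D) (hDe : emptyPerm ∈ D) {v v' : ℕ} (hv : v ≤ v') :
    tR π D v' ≤ tR π D v :=
  tR_le (TRok_mono_v hD (TRok_tR hDe v) hv)

lemma BLdec_zero (v : ℕ) : BLdec π v 0 := by
  intro i j hi _ _
  exact absurd hi.2 (by omega)

lemma BLdec_mono_l {v l l' : ℕ} (h : BLdec π v l) (hll : l' ≤ l) : BLdec π v l' :=
  fun i j hi hj hij => h i j ⟨hi.1, lt_of_lt_of_le hi.2 hll⟩ ⟨hj.1, lt_of_lt_of_le hj.2 hll⟩ hij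

lemma BLdec_anti_v {v v' l : ℕ} (h : BLdec π v' l) (hv : v ≤ v') : BLdec π v l :=
  fun i j hi hj hij => h i j ⟨lt_of_lt_of_le hi.1 hv, hi.2⟩ ⟨lt_of_lt_of_le hj.1 hv, hj.2⟩ hij

lemma hLn_mem (v : ℕ) : hLn π v ≤ π.1 ∧ BLdec π v (hLn π v) :=
  Nat.sSup_mem (s := {h | h ≤ π.1 ∧ BLdec π v h}) ⟨0, Nat.zero_le _, BLdec_zero (π := π) v⟩ ⟨π.1, fun _ hx => hx.1⟩

lemma le_hLn {v h : ℕ} (hb : BLdec π v h) (hh : h ≤ π.1) : h ≤ hLn π v :=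
  le_csSup ⟨π.1, fun _ hx => hx.1⟩ ⟨hh, hb⟩

lemma hLn_anti {v v' : ℕ} (hv : v ≤ v') : hLn π v' ≤ hLn π v :=
  le_hLn (BLdec_anti_v (hLn_mem v').2 hv) (hLn_mem v').1

lemma not_BLdec_of_lt {v h : ℕ} (h1 : hLn π v < h) (h2 : h ≤ π.1) : ¬ BLdec π v h :=
  fun hb => absurd (le_hLn hb h2) (not_le.mpr h1)

lemma BRinc_zero (v : ℕ) : BRinc π v 0 := by
  intro i j hi _ _
  exact absurd hi.2 (by omega)

lemma BRinc_mono_l {v r r' : ℕ} (h : BRinc π v r) (hrr : r' ≤ r) : BRinc π v r' :=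
  fun i j hi hj hij => h i j ⟨hi.1, lt_of_lt_of_le hi.2 hrr⟩ ⟨hj.1, lt_of_lt_of_le hj.2 hrr⟩ hij

lemma BRinc_mono_v {v v' r : ℕ} (h : BRinc π v r) (hv : v ≤ v') : BRinc π v' r :=
  fun i j hi hj hij => h i j ⟨le_trans hv hi.1, hi.2⟩ ⟨le_trans hv hj.1, hj.2⟩ hij

lemma hRn_mem (v : ℕ) : hRn π v ≤ π.1 ∧ BRinc π v (hRn π v) :=
  Nat.sSup_mem (s := {h | h ≤ π.1 ∧ BRinc π v h}) ⟨0, Nat.zero_le _, BRinc_zero (π := π) v⟩ ⟨π.1, fun _ hx => hx.1⟩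

lemma le_hRn {v h : ℕ} (hb : BRinc π v h) (hh : h ≤ π.1) : h ≤ hRn π v :=
  le_csSup ⟨π.1, fun _ hx => hx.1⟩ ⟨hh, hb⟩

lemma hRn_mono {v v' : ℕ} (hv : v ≤ v') : hRn π v ≤ hRn π v' :=
  le_hRn (BRinc_mono_v (hRn_mem v).2 hv) (hRn_mem v).1

lemma not_BRinc_of_lt {v h : ℕ} (h1 : hRn π v < h) (h2 : h ≤ π.1) : ¬ BRinc π v h :=
  fun hb => absurd (le_hRn hb h2) (not_le.mpr h1)

lemma exists_pair_of_not_BLdec {v l : ℕ} (h : ¬ BLdec π v l) :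
    ∃ e f : Fin π.1, e < f ∧ (e : ℕ) < v ∧ (f : ℕ) < v ∧ π.2 e < π.2 f ∧
      (π.2 e : ℕ) < l ∧ (π.2 f : ℕ) < l := by
  unfold BLdec DecOn at h
  push_neg at h
  obtain ⟨i, j, hi, hj, hij, hv⟩ := h
  rcases lt_trichotomy (π.2 i) (π.2 j) with h' | h' | h'
  · exact ⟨i, j, hij, hi.1, hj.1, h', hi.2, hj.2⟩
  · exact absurd (π.2.injective h') (ne_of_lt hij)
  · exact absurd hv (not_le.mpr h')

lemma exists_pair_of_not_BRinc {v r : ℕ} (h : ¬ BRinc π v r) :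
    ∃ a b : Fin π.1, a < b ∧ v ≤ (a : ℕ) ∧ v ≤ (b : ℕ) ∧ π.2 b < π.2 a ∧
      (π.2 a : ℕ) < r ∧ (π.2 b : ℕ) < r := by
  unfold BRinc IncOn at h
  push_neg at h
  obtain ⟨i, j, hi, hj, hij, hv⟩ := h
  rcases lt_trichotomy (π.2 j) (π.2 i) with h' | h' | h'
  · exact ⟨i, j, hij, hi.1, hj.1, h', hi.2, hj.2⟩
  · exact absurd (π.2.injective h') (Ne.symm (ne_of_lt hij))
  · exact absurd hv (not_le.mpr h')

lemma squintLE_iff (hC : IsPermClass C) (hCe : emptyPerm ∈ C)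
    (hD : IsPermClass D) (hDe : emptyPerm ∈ D) :
    π ∈ SquintLE C D (Av {perm12}) (Av {perm21}) ↔
      ∃ v, v ≤ π.1 ∧ tL π C v ≤ hLn π v ∧ tR π D v ≤ hRn π v ∧ tL π C v ≤ hRn π v := by
  constructor
  · rintro ⟨v, l, r, hv, hl, hr, hlr, h1, h2, h3, h4⟩
    have htl : tL π C v ≤ l := tL_le h1
    have hhl : l ≤ hLn π v := le_hLn (patternIn_av12_iff.mp h2) hl
    have htr : tR π D v ≤ r := tR_le h3
    have hhr : r ≤ hRn π v := le_hRn (patternIn_av21_iff.mp h4) hr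
    exact ⟨v, hv, le_trans htl hhl, le_trans htr hhr,
      le_trans htl (le_trans hlr hhr)⟩
  · rintro ⟨v, hv, h1, h2, h3⟩
    refine ⟨v, tL π C v, max (tL π C v) (tR π D v), hv, tL_le_top hCe v,
      max_le (tL_le_top hCe v) (tR_le_top hDe v), le_max_left _ _,
      TLok_tL hCe v, ?_, ?_, ?_⟩
    · exact patternIn_av12_iff.mpr (BLdec_mono_l (hLn_mem v).2 h1)
    · exact TRok_of_le hD (TRok_tR hDe v) (le_max_right _ _)
    · exact patternIn_av21_iff.mpr (BRinc_mono_l (hRn_mem v).2 (max_le h3 h2))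

lemma squintGE_iff (hC : IsPermClass C) (hCe : emptyPerm ∈ C)
    (hD : IsPermClass D) (hDe : emptyPerm ∈ D) :
    π ∈ SquintGE C D (Av {perm12}) (Av {perm21}) ↔
      ∃ v, v ≤ π.1 ∧ tL π C v ≤ hLn π v ∧ tR π D v ≤ hRn π v ∧ tR π D v ≤ hLn π v := by
  constructor
  · rintro ⟨v, l, r, hv, hl, hr, hrl, h1, h2, h3, h4⟩
    have htl : tL π C v ≤ l := tL_le h1
    have hhl : l ≤ hLn π v := le_hLn (patternIn_av12_iff.mp h2) hl
    have htr : tR π D v ≤ r := tR_le h3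
    have hhr : r ≤ hRn π v := le_hRn (patternIn_av21_iff.mp h4) hr
    exact ⟨v, hv, le_trans htl hhl, le_trans htr hhr,
      le_trans htr (le_trans hrl hhl)⟩
  · rintro ⟨v, hv, h1, h2, h3⟩
    refine ⟨v, max (tL π C v) (tR π D v), tR π D v, hv,
      max_le (tL_le_top hCe v) (tR_le_top hDe v), tR_le_top hDe v, le_max_right _ _,
      ?_, ?_, TRok_tR hDe v, ?_⟩
    · exact TLok_of_le hC (TLok_tL hCe v) (le_max_left _ _)
    · exact patternIn_av12_iff.mpr (BLdec_mono_l (hLn_mem v).2 (max_le h1 h3))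
    · exact patternIn_av21_iff.mpr (BRinc_mono_l (hRn_mem v).2 h2)

lemma gridClass_iff (hC : IsPermClass C) (hCe : emptyPerm ∈ C)
    (hD : IsPermClass D) (hDe : emptyPerm ∈ D) :
    π ∈ GridClass C D (Av {perm12}) (Av {perm21}) ↔
      ∃ v, v ≤ π.1 ∧ tL π C v ≤ hLn π v ∧ tR π D v ≤ hRn π v ∧
        tL π C v ≤ hRn π v ∧ tR π D v ≤ hLn π v := by
  constructor
  · rintro ⟨v, h, hv, hh, h1, h2, h3, h4⟩
    have htl : tL π C v ≤ h := tL_le h1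
    have hhl : h ≤ hLn π v := le_hLn (patternIn_av12_iff.mp h3) hh
    have htr : tR π D v ≤ h := tR_le h2
    have hhr : h ≤ hRn π v := le_hRn (patternIn_av21_iff.mp h4) hh
    exact ⟨v, hv, le_trans htl hhl, le_trans htr hhr, le_trans htl hhr, le_trans htr hhl⟩
  · rintro ⟨v, hv, h1, h2, h3, h4⟩
    refine ⟨v, max (tL π C v) (tR π D v), hv,
      max_le (tL_le_top hCe v) (tR_le_top hDe v),
      TLok_of_le hC (TLok_tL hCe v) (le_max_left _ _),
      TRok_of_le hD (TRok_tR hDe v) (le_max_right _ _), ?_, ?_⟩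
    · exact patternIn_av12_iff.mpr (BLdec_mono_l (hLn_mem v).2 (max_le h1 h4))
    · exact patternIn_av21_iff.mpr (BRinc_mono_l (hRn_mem v).2 (max_le h3 h2))

lemma propagation {tl tr hl hr : ℕ → ℕ}
    (htl : ∀ ⦃a b⦄, a ≤ b → tl a ≤ tl b) (htr : ∀ ⦃a b⦄, a ≤ b → tr b ≤ tr a)
    (hhl : ∀ ⦃a b⦄, a ≤ b → hl b ≤ hl a) (hhr : ∀ ⦃a b⦄, a ≤ b → hr a ≤ hr b)
    {v₁ v₂ : ℕ}
    (p1 : tl v₁ ≤ hl v₁) (q1 : tr v₁ ≤ hr v₁) (r1 : tl v₁ ≤ hr v₁)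
    (p2 : tl v₂ ≤ hl v₂) (q2 : tr v₂ ≤ hr v₂) (s2 : tr v₂ ≤ hl v₂) :
    ∃ v, (v₁ ≤ v ∧ v ≤ v₂ ∨ v₂ ≤ v ∧ v ≤ v₁) ∧
      tl v ≤ hl v ∧ tr v ≤ hr v ∧ tl v ≤ hr v ∧ tr v ≤ hl v := by
  rcases le_total v₁ v₂ with hle | hle
  · -- P holds up to v₂, Q holds from v₁ on; R(v₁); propagate R upward
    have P : ∀ v, v ≤ v₂ → tl v ≤ hl v := fun v hv =>
      le_trans (htl hv) (le_trans p2 (hhl hv))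
    have Q : ∀ v, v₁ ≤ v → tr v ≤ hr v := fun v hv =>
      le_trans (htr hv) (le_trans q1 (hhr hv))
    have key : ∀ j, v₁ + j ≤ v₂ →
        (∃ v, v₁ ≤ v ∧ v ≤ v₂ ∧ tl v ≤ hl v ∧ tr v ≤ hr v ∧ tl v ≤ hr v ∧ tr v ≤ hl v) ∨
          tl (v₁ + j) ≤ hr (v₁ + j) := by
      intro j
      induction j with
      | zero => intro _; right; simpa using r1
      | succ j ih =>
        intro hj
        rcases ih (by omega) with hdone | hR
        · exact Or.inl hdone
        · by_cases hS : tr (v₁ + j) ≤ hl (v₁ + j)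
          · exact Or.inl ⟨v₁ + j, by omega, by omega, P _ (by omega), Q _ (by omega), hR, hS⟩
          · right
            have h1 : tl (v₁ + (j+1)) ≤ hl (v₁ + (j+1)) := P _ (by omega)
            have h2 : hl (v₁ + (j+1)) ≤ hl (v₁ + j) := hhl (by omega)
            have h3 : hl (v₁ + j) < tr (v₁ + j) := not_le.mp hS
            have h4 : tr (v₁ + j) ≤ hr (v₁ + j) := Q _ (by omega)
            have h5 : hr (v₁ + j) ≤ hr (v₁ + (j+1)) := hhr (by omega)
            omega
    rcases key (v₂ - v₁) (by omega) with hdone | hR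
    · obtain ⟨v, hv1, hv2, h⟩ := hdone
      exact ⟨v, Or.inl ⟨hv1, hv2⟩, h⟩
    · have hveq : v₁ + (v₂ - v₁) = v₂ := by omega
      rw [hveq] at hR
      exact ⟨v₂, Or.inl ⟨hle, le_refl _⟩, p2, q2, hR, s2⟩
  · -- v₂ ≤ v₁ : S(v₂); propagate S upward using ¬R(v) → S(v+1)
    have P : ∀ v, v ≤ v₁ → tl v ≤ hl v := fun v hv =>
      le_trans (htl hv) (le_trans p1 (hhl hv))
    have Q : ∀ v, v₂ ≤ v → tr v ≤ hr v := fun v hv =>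
      le_trans (htr hv) (le_trans q2 (hhr hv))
    have key : ∀ j, v₂ + j ≤ v₁ →
        (∃ v, v₂ ≤ v ∧ v ≤ v₁ ∧ tl v ≤ hl v ∧ tr v ≤ hr v ∧ tl v ≤ hr v ∧ tr v ≤ hl v) ∨
          tr (v₂ + j) ≤ hl (v₂ + j) := by
      intro j
      induction j with
      | zero => intro _; right; simpa using s2
      | succ j ih =>
        intro hj
        rcases ih (by omega) with hdone | hS
        · exact Or.inl hdone
        · by_cases hR : tl (v₂ + j) ≤ hr (v₂ + j)
          · exact Or.inl ⟨v₂ + j, by omega, by omega, P _ (by omega), Q _ (by omega), hR, hS⟩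
          · right
            have h1 : tr (v₂ + (j+1)) ≤ tr (v₂ + j) := htr (by omega)
            have h2 : hr (v₂ + j) < tl (v₂ + j) := not_le.mp hR
            have h3 : tr (v₂ + j) ≤ hr (v₂ + j) := Q _ (by omega)
            have h4 : tl (v₂ + j) ≤ tl (v₂ + (j+1)) := htl (by omega)
            have h5 : tl (v₂ + (j+1)) ≤ hl (v₂ + (j+1)) := P _ (by omega)
            -- tr (v₂+j+1) ≤ tr (v₂+j) ≤ hr (v₂+j) < tl (v₂+j) ≤ tl(v₂+j+1) ≤ hl (v₂+j+1)
            omega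
    rcases key (v₁ - v₂) (by omega) with hdone | hS
    · obtain ⟨v, hv1, hv2, h⟩ := hdone
      exact ⟨v, Or.inr ⟨hv1, hv2⟩, h⟩
    · have hveq : v₂ + (v₁ - v₂) = v₁ := by omega
      rw [hveq] at hS
      exact ⟨v₁, Or.inr ⟨hle, le_refl _⟩, p1, q1, r1, hS⟩

lemma grid_eq_squint_inter (hC : IsPermClass C) (hCe : emptyPerm ∈ C)
    (hD : IsPermClass D) (hDe : emptyPerm ∈ D) :
    GridClass C D (Av {perm12}) (Av {perm21}) =
      SquintLE C D (Av {perm12}) (Av {perm21}) ∩ SquintGE C D (Av {perm12}) (Av {perm21}) := by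
  ext π
  rw [Set.mem_inter_iff, gridClass_iff hC hCe hD hDe, squintLE_iff hC hCe hD hDe,
    squintGE_iff hC hCe hD hDe]
  constructor
  · rintro ⟨v, hv, h1, h2, h3, h4⟩
    exact ⟨⟨v, hv, h1, h2, h3⟩, ⟨v, hv, h1, h2, h4⟩⟩
  · rintro ⟨⟨v₁, hv₁, p1, q1, r1⟩, ⟨v₂, hv₂, p2, q2, s2⟩⟩
    obtain ⟨v, hvb, h⟩ := propagation (fun a b hab => tL_mono hC hCe hab)
      (fun a b hab => tR_anti hD hDe hab) (fun a b hab => hLn_anti hab)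
      (fun a b hab => hRn_mono hab) p1 q1 r1 p2 q2 s2
    refine ⟨v, ?_, h⟩
    rcases hvb with ⟨_, h2⟩ | ⟨_, h2⟩
    · exact le_trans h2 hv₂
    · exact le_trans h2 hv₁

lemma av_union (B₁ B₂ : Set Perm') : Av (B₁ ∪ B₂) = Av B₁ ∩ Av B₂ := by
  ext π
  simp only [Av, Set.mem_union, Set.mem_inter_iff, Set.mem_setOf_eq]
  constructor
  · intro h
    exact ⟨fun β hβ => h β (Or.inl hβ), fun β hβ => h β (Or.inr hβ)⟩
  · rintro ⟨h1, h2⟩ β (hβ | hβ)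
    · exact h1 β hβ
    · exact h2 β hβ

end Numeric

section KillSec
open Set

/-- A finite set of points of `π` witnessing failure of every squint-LE division. -/
def Kill (π : Perm') (B₀ B₁ : Set Perm') (W : Finset (Fin π.1)) : Prop :=
  ∀ w l r : ℕ, l ≤ r →
    (∃ β ∈ B₀, CopyOn π β {x | x ∈ W ∧ (x : ℕ) < w ∧ l ≤ (π.2 x : ℕ)}) ∨
    (∃ e f : Fin π.1, e ∈ W ∧ f ∈ W ∧ e < f ∧ (f : ℕ) < w ∧ π.2 e < π.2 f ∧
      (π.2 f : ℕ) < l) ∨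
    (∃ δ ∈ B₁, CopyOn π δ {x | x ∈ W ∧ w ≤ (x : ℕ) ∧ r ≤ (π.2 x : ℕ)}) ∨
    (∃ a b : Fin π.1, a ∈ W ∧ b ∈ W ∧ a < b ∧ w ≤ (a : ℕ) ∧ π.2 b < π.2 a ∧
      (π.2 a : ℕ) < r)

variable {π : Perm'} {B₀ B₁ : Set Perm'}

lemma not_squintLE_of_kill {W : Finset (Fin π.1)} (hK : Kill π B₀ B₁ W)
    {σ : Perm'} (hσ : PatternOn π (↑W) σ) :
    σ ∉ SquintLE (Av B₀) (Av B₁) (Av {perm12}) (Av {perm21}) := by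
  classical
  obtain ⟨f, fmono, frange, fiso⟩ := hσ
  rintro ⟨v, l, r, hv, hl, hr, hlr, h1, h2, h3, h4⟩
  have fiso_le : ∀ i j, σ.2 i ≤ σ.2 j ↔ π.2 (f i) ≤ π.2 (f j) := by
    intro i j
    rw [← not_lt, ← not_lt]
    exact not_congr (fiso j i)
  have hfW : ∀ i, f i ∈ W := by
    intro i
    have : f i ∈ Set.range f := Set.mem_range_self i
    rw [frange] at this
    exact this
  set w : ℕ := if hvk : v < σ.1 then (f ⟨v, hvk⟩ : ℕ) else π.1 with hw
  have posiff : ∀ i : Fin σ.1, ((f i : ℕ) < w ↔ (i : ℕ) < v) := by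
    intro i
    rw [hw]
    split
    · next hvk =>
      constructor
      · intro h
        exact Fin.lt_def.mp (fmono.lt_iff_lt.mp (Fin.lt_def.mpr h))
      · intro h
        exact Fin.lt_def.mp (fmono (Fin.lt_def.mpr h))
    · next hvk =>
      constructor
      · intro _
        have := i.isLt
        omega
      · intro _
        exact (f i).isLt
  set ml : ℕ := if hlk : l < σ.1 then (π.2 (f (σ.2.symm ⟨l, hlk⟩)) : ℕ) else π.1 with hml
  set mr : ℕ := if hrk : r < σ.1 then (π.2 (f (σ.2.symm ⟨r, hrk⟩)) : ℕ) else π.1 with hmr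
  have valiff_l : ∀ i : Fin σ.1, (ml ≤ (π.2 (f i) : ℕ) ↔ l ≤ (σ.2 i : ℕ)) := by
    intro i
    rw [hml]
    split
    · next hlk =>
      constructor
      · intro h
        have h2 : σ.2 (σ.2.symm ⟨l, hlk⟩) ≤ σ.2 i := (fiso_le _ _).mpr (Fin.le_def.mpr h)
        rw [Equiv.apply_symm_apply] at h2
        exact Fin.le_def.mp h2
      · intro h
        have h2 : σ.2 (σ.2.symm ⟨l, hlk⟩) ≤ σ.2 i := by
          rw [Equiv.apply_symm_apply]
          exact Fin.le_def.mpr h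
        exact Fin.le_def.mp ((fiso_le _ _).mp h2)
    · next hlk =>
      have h1 := (σ.2 i).isLt
      have h2 := (π.2 (f i)).isLt
      constructor
      · intro h; omega
      · intro h; omega
  have valiff_r : ∀ i : Fin σ.1, (mr ≤ (π.2 (f i) : ℕ) ↔ r ≤ (σ.2 i : ℕ)) := by
    intro i
    rw [hmr]
    split
    · next hrk =>
      constructor
      · intro h
        have h2 : σ.2 (σ.2.symm ⟨r, hrk⟩) ≤ σ.2 i := (fiso_le _ _).mpr (Fin.le_def.mpr h)
        rw [Equiv.apply_symm_apply] at h2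
        exact Fin.le_def.mp h2
      · intro h
        have h2 : σ.2 (σ.2.symm ⟨r, hrk⟩) ≤ σ.2 i := by
          rw [Equiv.apply_symm_apply]
          exact Fin.le_def.mpr h
        exact Fin.le_def.mp ((fiso_le _ _).mp h2)
    · next hrk =>
      have h1 := (σ.2 i).isLt
      have h2 := (π.2 (f i)).isLt
      constructor
      · intro h; omega
      · intro h; omega
  have hmlr : ml ≤ mr := by
    rw [hml, hmr]
    split
    · next hlk =>
      split
      · next hrk =>
        have h2 : σ.2 (σ.2.symm ⟨l, hlk⟩) ≤ σ.2 (σ.2.symm ⟨r, hrk⟩) := by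
          rw [Equiv.apply_symm_apply, Equiv.apply_symm_apply]
          exact Fin.le_def.mpr hlr
        exact Fin.le_def.mp ((fiso_le _ _).mp h2)
      · next hrk =>
        exact le_of_lt (π.2 _).isLt
    · next hlk =>
      split
      · next hrk => omega
      · next hrk => exact le_refl _
  have himg1 : f '' {i : Fin σ.1 | (i : ℕ) < v ∧ l ≤ (σ.2 i : ℕ)} =
      {x : Fin π.1 | x ∈ W ∧ (x : ℕ) < w ∧ ml ≤ (π.2 x : ℕ)} := by
    ext x
    constructor
    · rintro ⟨i, ⟨hi1, hi2⟩, rfl⟩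
      exact ⟨hfW i, (posiff i).mpr hi1, (valiff_l i).mpr hi2⟩
    · rintro ⟨hxW, hx2, hx3⟩
      have : x ∈ Set.range f := frange ▸ (hxW : x ∈ (↑W : Set (Fin π.1)))
      obtain ⟨i, rfl⟩ := this
      exact ⟨i, ⟨(posiff i).mp hx2, (valiff_l i).mp hx3⟩, rfl⟩
  have himg2 : f '' {i : Fin σ.1 | (i : ℕ) < v ∧ (σ.2 i : ℕ) < l} =
      {x : Fin π.1 | x ∈ W ∧ (x : ℕ) < w ∧ (π.2 x : ℕ) < ml} := by
    ext x
    constructor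
    · rintro ⟨i, ⟨hi1, hi2⟩, rfl⟩
      refine ⟨hfW i, (posiff i).mpr hi1, ?_⟩
      by_contra h
      exact absurd ((valiff_l i).mp (not_lt.mp h)) (by omega)
    · rintro ⟨hxW, hx2, hx3⟩
      have : x ∈ Set.range f := frange ▸ (hxW : x ∈ (↑W : Set (Fin π.1)))
      obtain ⟨i, rfl⟩ := this
      refine ⟨i, ⟨(posiff i).mp hx2, ?_⟩, rfl⟩
      by_contra h
      exact absurd ((valiff_l i).mpr (not_lt.mp h)) (by omega)
  have himg3 : f '' {i : Fin σ.1 | v ≤ (i : ℕ) ∧ r ≤ (σ.2 i : ℕ)} =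
      {x : Fin π.1 | x ∈ W ∧ w ≤ (x : ℕ) ∧ mr ≤ (π.2 x : ℕ)} := by
    ext x
    constructor
    · rintro ⟨i, ⟨hi1, hi2⟩, rfl⟩
      refine ⟨hfW i, ?_, (valiff_r i).mpr hi2⟩
      have := (posiff i).not
      omega
    · rintro ⟨hxW, hx2, hx3⟩
      have : x ∈ Set.range f := frange ▸ (hxW : x ∈ (↑W : Set (Fin π.1)))
      obtain ⟨i, rfl⟩ := this
      refine ⟨i, ⟨?_, (valiff_r i).mp hx3⟩, rfl⟩
      have := (posiff i).not
      omega
  have himg4 : f '' {i : Fin σ.1 | v ≤ (i : ℕ) ∧ (σ.2 i : ℕ) < r} =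
      {x : Fin π.1 | x ∈ W ∧ w ≤ (x : ℕ) ∧ (π.2 x : ℕ) < mr} := by
    ext x
    constructor
    · rintro ⟨i, ⟨hi1, hi2⟩, rfl⟩
      refine ⟨hfW i, ?_, ?_⟩
      · have := (posiff i).not
        omega
      · by_contra h
        exact absurd ((valiff_r i).mp (not_lt.mp h)) (by omega)
    · rintro ⟨hxW, hx2, hx3⟩
      have : x ∈ Set.range f := frange ▸ (hxW : x ∈ (↑W : Set (Fin π.1)))
      obtain ⟨i, rfl⟩ := this
      refine ⟨i, ⟨?_, ?_⟩, rfl⟩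
      · have := (posiff i).not
        omega
      · by_contra h
        exact absurd ((valiff_r i).mpr (not_lt.mp h)) (by omega)
  have F1 : PatternIn π {x : Fin π.1 | x ∈ W ∧ (x : ℕ) < w ∧ ml ≤ (π.2 x : ℕ)} (Av B₀) := by
    rw [← himg1]; exact patternIn_image fmono fiso h1
  have F2 : DecOn π {x : Fin π.1 | x ∈ W ∧ (x : ℕ) < w ∧ (π.2 x : ℕ) < ml} := by
    rw [← himg2]; exact decOn_image fmono fiso (patternIn_av12_iff.mp h2)
  have F3 : PatternIn π {x : Fin π.1 | x ∈ W ∧ w ≤ (x : ℕ) ∧ mr ≤ (π.2 x : ℕ)} (Av B₁) := by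
    rw [← himg3]; exact patternIn_image fmono fiso h3
  have F4 : IncOn π {x : Fin π.1 | x ∈ W ∧ w ≤ (x : ℕ) ∧ (π.2 x : ℕ) < mr} := by
    rw [← himg4]; exact incOn_image fmono fiso (patternIn_av21_iff.mp h4)
  rcases hK w ml mr hmlr with ⟨β, hβ, hcopy⟩ | ⟨e, f', heW, hfW', hef, hfw, hv1, hv2⟩ |
    ⟨δ, hδ, hcopy⟩ | ⟨a, b, haW, hbW, hab, haw, hv1, hv2⟩
  · exact not_patternIn_of_copyOn hβ hcopy F1
  · have hew : (e : ℕ) < w := lt_trans (Fin.lt_def.mp hef) hfw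
    have heml : (π.2 e : ℕ) < ml := lt_trans (Fin.lt_def.mp hv1) hv2
    exact absurd (F2 e f' ⟨heW, hew, heml⟩ ⟨hfW', hfw, hv2⟩ hef) (lt_asymm hv1)
  · exact not_patternIn_of_copyOn hδ hcopy F3
  · have hbw : w ≤ (b : ℕ) := le_trans haw (le_of_lt (Fin.lt_def.mp hab))
    have hbmr : (π.2 b : ℕ) < mr := lt_trans (Fin.lt_def.mp hv1) hv2
    exact absurd (F4 a b ⟨haW, haw, hv2⟩ ⟨hbW, hbw, hbmr⟩ hab) (lt_asymm hv1)

lemma mem_iff_lt_card_filter {k : ℕ} (P : Fin k → Prop) [DecidablePred P]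
    (hdown : ∀ i j : Fin k, i ≤ j → P j → P i) (i : Fin k) :
    ((i : ℕ) < (Finset.univ.filter P).card ↔ P i) := by
  constructor
  · intro h
    by_contra hP
    have hsub : Finset.univ.filter P ⊆ Finset.univ.filter (fun j : Fin k => j < i) := by
      intro j hj
      simp only [Finset.mem_filter, Finset.mem_univ, true_and] at hj ⊢
      by_contra hlt
      exact hP (hdown i j (not_lt.mp hlt) hj)
    have hc : (Finset.univ.filter (fun j : Fin k => j < i)).card = (i : ℕ) := by
      have he : (Finset.univ.filter (fun j : Fin k => j < i)) = Finset.Iio i := by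
        ext x; simp
      rw [he]
      exact Fin.card_Iio i
    have := Finset.card_le_card hsub
    omega
  · intro hP
    have hsub : Finset.univ.filter (fun j : Fin k => j ≤ i) ⊆ Finset.univ.filter P := by
      intro j hj
      simp only [Finset.mem_filter, Finset.mem_univ, true_and] at hj ⊢
      exact hdown j i hj hP
    have hc : (Finset.univ.filter (fun j : Fin k => j ≤ i)).card = (i : ℕ) + 1 := by
      have he : (Finset.univ.filter (fun j : Fin k => j ≤ i)) = Finset.Iic i := by
        ext x; simp
      rw [he]
      exact Fin.card_Iic i
    have := Finset.card_le_card hsub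
    omega

lemma rank_eq {σ π : Perm'} {f : Fin σ.1 → Fin π.1}
    (fiso : ∀ i j, σ.2 i < σ.2 j ↔ π.2 (f i) < π.2 (f j)) (i : Fin σ.1) :
    (σ.2 i : ℕ) = (Finset.univ.filter (fun j : Fin σ.1 => π.2 (f j) < π.2 (f i))).card := by
  classical
  have h1 : (Finset.univ.filter (fun j : Fin σ.1 => π.2 (f j) < π.2 (f i))) =
      (Finset.univ.filter (fun j : Fin σ.1 => σ.2 j < σ.2 i)) := by
    apply Finset.filter_congr
    intro j _
    exact (fiso j i).symm
  rw [h1]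
  have h2 : (Finset.univ.filter (fun j : Fin σ.1 => σ.2 j < σ.2 i)).card =
      (Finset.univ.filter (fun b : Fin σ.1 => b < σ.2 i)).card := by
    apply Finset.card_bij' (fun j _ => σ.2 j) (fun b _ => σ.2.symm b)
    · intro a ha
      simp only [Finset.mem_filter, Finset.mem_univ, true_and] at ha ⊢
      exact ha
    · intro b hb
      simp only [Finset.mem_filter, Finset.mem_univ, true_and] at hb ⊢
      rwa [Equiv.apply_symm_apply]
    · intro a _
      exact σ.2.symm_apply_apply a
    · intro b _
      exact σ.2.apply_symm_apply b
  have he : (Finset.univ.filter (fun b : Fin σ.1 => b < σ.2 i)) = Finset.Iio (σ.2 i) := by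
    ext x; simp
  rw [h2, he, Fin.card_Iio]

lemma mem_squintLE_of_contains {C D : Set Perm'} (hC : IsPermClass C) (hD : IsPermClass D)
    {σ π : Perm'} (hcon : Contains σ π)
    (hπ : π ∈ SquintLE C D (Av {perm12}) (Av {perm21})) :
    σ ∈ SquintLE C D (Av {perm12}) (Av {perm21}) := by
  classical
  obtain ⟨f, fmono, fiso⟩ := hcon
  obtain ⟨v, l, r, hv, hl, hr, hlr, h1, h2, h3, h4⟩ := hπ
  set vσ := (Finset.univ.filter (fun i : Fin σ.1 => (f i : ℕ) < v)).card with hvσ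
  set lσ := (Finset.univ.filter (fun i : Fin σ.1 => (π.2 (f i) : ℕ) < l)).card with hlσ
  set rσ := (Finset.univ.filter (fun i : Fin σ.1 => (π.2 (f i) : ℕ) < r)).card with hrσ
  have posiff : ∀ i : Fin σ.1, ((i : ℕ) < vσ ↔ (f i : ℕ) < v) := by
    intro i
    exact mem_iff_lt_card_filter _ (fun a b hab hb => by
      have : (f a : ℕ) ≤ (f b : ℕ) := Fin.le_def.mp (fmono.monotone hab)
      omega) i
  have valiff : ∀ (t : ℕ) (i : Fin σ.1),
      ((σ.2 i : ℕ) < (Finset.univ.filter (fun j : Fin σ.1 => (π.2 (f j) : ℕ) < t)).card ↔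
        (π.2 (f i) : ℕ) < t) := by
    intro t i
    rw [rank_eq fiso i]
    constructor
    · intro h
      by_contra hR
      have hsub : Finset.univ.filter (fun j : Fin σ.1 => (π.2 (f j) : ℕ) < t) ⊆
          Finset.univ.filter (fun j : Fin σ.1 => π.2 (f j) < π.2 (f i)) := by
        intro j hj
        simp only [Finset.mem_filter, Finset.mem_univ, true_and] at hj ⊢
        rw [Fin.lt_def]
        omega
      have := Finset.card_le_card hsub
      omega
    · intro h
      apply Finset.card_lt_card
      rw [Finset.ssubset_def]
      constructor
      · intro j hj
        simp only [Finset.mem_filter, Finset.mem_univ, true_and] at hj ⊢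
        have := Fin.lt_def.mp hj
        omega
      · intro hsup
        have := hsup (Finset.mem_filter.mpr ⟨Finset.mem_univ i, h⟩)
        simp only [Finset.mem_filter, Finset.mem_univ, true_and] at this
        exact absurd this (lt_irrefl _)
  refine ⟨vσ, lσ, rσ, ?_, ?_, ?_, ?_, ?_, ?_, ?_, ?_⟩
  · rw [hvσ]
    calc _ ≤ Finset.univ.card := Finset.card_filter_le _ _
    _ = σ.1 := by simp
  · rw [hlσ]
    calc _ ≤ Finset.univ.card := Finset.card_filter_le _ _
    _ = σ.1 := by simp
  · rw [hrσ]
    calc _ ≤ Finset.univ.card := Finset.card_filter_le _ _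
    _ = σ.1 := by simp
  · rw [hlσ, hrσ]
    apply Finset.card_le_card
    intro j hj
    simp only [Finset.mem_filter, Finset.mem_univ, true_and] at hj ⊢
    omega
  · -- top-left in C
    refine patternIn_mono fmono fiso ?_ hC h1
    rintro i ⟨hi1, hi2⟩
    refine ⟨(posiff i).mp hi1, ?_⟩
    have := (valiff l i).not
    omega
  · refine patternIn_mono fmono fiso ?_ (isPermClass_av _) h2
    rintro i ⟨hi1, hi2⟩
    exact ⟨(posiff i).mp hi1, (valiff l i).mp hi2⟩
  · refine patternIn_mono fmono fiso ?_ hD h3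
    rintro i ⟨hi1, hi2⟩
    refine ⟨?_, ?_⟩
    · have := (posiff i).not
      omega
    · have := (valiff r i).not
      omega
  · refine patternIn_mono fmono fiso ?_ (isPermClass_av _) h4
    rintro i ⟨hi1, hi2⟩
    refine ⟨?_, (valiff r i).mp hi2⟩
    have := (posiff i).not
    omega

lemma finite_bounded_perms (N : ℕ) : {β : Perm' | β.1 ≤ N}.Finite := by
  have hsub : {β : Perm' | β.1 ≤ N} ⊆
      ⋃ k ∈ Finset.range (N + 1),
        (fun e : Equiv.Perm (Fin k) => (⟨k, e⟩ : Perm')) '' Set.univ := by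
    intro β hβ
    simp only [Set.mem_iUnion, Set.mem_image, Set.mem_univ, true_and]
    exact ⟨β.1, Finset.mem_range.mpr (by simp at hβ; omega), β.2, rfl⟩
  refine Set.Finite.subset ?_ hsub
  apply Set.Finite.biUnion (Finset.range (N + 1)).finite_toSet
  intro k _
  exact Set.finite_univ.image _

end KillSec

section ExistsKill
open Set

variable {π : Perm'} {B₀ B₁ : Set Perm'}

lemma card_insert_le' {α : Type*} [DecidableEq α] (a : α) (s : Finset α) {m : ℕ}
    (h : s.card ≤ m) : (insert a s).card ≤ m + 1 :=
  le_trans (Finset.card_insert_le _ _) (by omega)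

lemma kill_branch_left (P3 P4 : Prop) {W : Finset (Fin π.1)} {β : Perm'} (hβ : β ∈ B₀)
    {S : Set (Fin π.1)} (hcopy : CopyOn π β S) {g w l : ℕ}
    (hS : ∀ x ∈ S, x ∈ W ∧ (x : ℕ) < w ∧ g ≤ (π.2 x : ℕ))
    {e f : Fin π.1} (heW : e ∈ W) (hfW : f ∈ W) (hef : e < f) (hfw : (f : ℕ) < w)
    (hefv : π.2 e < π.2 f) (hfg : (π.2 f : ℕ) ≤ g) :
    (∃ β ∈ B₀, CopyOn π β {x | x ∈ W ∧ (x : ℕ) < w ∧ l ≤ (π.2 x : ℕ)}) ∨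
    (∃ e f : Fin π.1, e ∈ W ∧ f ∈ W ∧ e < f ∧ (f : ℕ) < w ∧ π.2 e < π.2 f ∧
      (π.2 f : ℕ) < l) ∨ P3 ∨ P4 := by
  rcases le_or_gt l g with hl | hl
  · left
    refine ⟨β, hβ, hcopy.mono ?_⟩
    intro x hx
    obtain ⟨h1, h2, h3⟩ := hS x hx
    exact ⟨h1, h2, by omega⟩
  · right; left
    exact ⟨e, f, heW, hfW, hef, hfw, hefv, by omega⟩

lemma kill_branch_right (P1 P2 : Prop) {W : Finset (Fin π.1)} {δ : Perm'} (hδ : δ ∈ B₁)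
    {S : Set (Fin π.1)} (hcopy : CopyOn π δ S) {g w r : ℕ}
    (hS : ∀ x ∈ S, x ∈ W ∧ w ≤ (x : ℕ) ∧ g ≤ (π.2 x : ℕ))
    {a b : Fin π.1} (haW : a ∈ W) (hbW : b ∈ W) (hab : a < b) (haw : w ≤ (a : ℕ))
    (habv : π.2 b < π.2 a) (hag : (π.2 a : ℕ) ≤ g) :
    P1 ∨ P2 ∨ (∃ δ ∈ B₁, CopyOn π δ {x | x ∈ W ∧ w ≤ (x : ℕ) ∧ r ≤ (π.2 x : ℕ)}) ∨
    (∃ a b : Fin π.1, a ∈ W ∧ b ∈ W ∧ a < b ∧ w ≤ (a : ℕ) ∧ π.2 b < π.2 a ∧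
      (π.2 a : ℕ) < r) := by
  rcases le_or_gt r g with hr | hr
  · right; right; left
    refine ⟨δ, hδ, hcopy.mono ?_⟩
    intro x hx
    obtain ⟨h1, h2, h3⟩ := hS x hx
    exact ⟨h1, h2, by omega⟩
  · right; right; right
    exact ⟨a, b, haW, hbW, hab, haw, habv, by omega⟩

lemma kill_branch_mid (P2 P3 : Prop) {W : Finset (Fin π.1)} {β : Perm'} (hβ : β ∈ B₀)
    {S : Set (Fin π.1)} (hcopy : CopyOn π β S) {h w l r : ℕ} (hlr : l ≤ r)
    (hS : ∀ x ∈ S, x ∈ W ∧ (x : ℕ) < w ∧ h ≤ (π.2 x : ℕ))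
    {a b : Fin π.1} (haW : a ∈ W) (hbW : b ∈ W) (hab : a < b) (haw : w ≤ (a : ℕ))
    (habv : π.2 b < π.2 a) (hah : (π.2 a : ℕ) = h) :
    (∃ β ∈ B₀, CopyOn π β {x | x ∈ W ∧ (x : ℕ) < w ∧ l ≤ (π.2 x : ℕ)}) ∨ P2 ∨ P3 ∨
    (∃ a b : Fin π.1, a ∈ W ∧ b ∈ W ∧ a < b ∧ w ≤ (a : ℕ) ∧ π.2 b < π.2 a ∧
      (π.2 a : ℕ) < r) := by
  rcases le_or_gt r h with hr | hr
  · left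
    refine ⟨β, hβ, hcopy.mono ?_⟩
    intro x hx
    obtain ⟨h1, h2, h3⟩ := hS x hx
    exact ⟨h1, h2, by omega⟩
  · right; right; right
    exact ⟨a, b, haW, hbW, hab, haw, habv, by omega⟩

lemma pair_at_hRn {v : ℕ} (hh : hRn π v < π.1) :
    ∃ a b : Fin π.1, a < b ∧ v ≤ (a : ℕ) ∧ π.2 b < π.2 a ∧ (π.2 a : ℕ) = hRn π v := by
  obtain ⟨a, b, hab, hav, hbv, hval, har, hbr⟩ :=
    exists_pair_of_not_BRinc
      (not_BRinc_of_lt (show hRn π v < hRn π v + 1 by omega) (by omega))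
  refine ⟨a, b, hab, hav, hval, ?_⟩
  by_contra hne
  have hlt : (π.2 a : ℕ) < hRn π v := by omega
  have hblt : (π.2 b : ℕ) < hRn π v := by
    have := Fin.lt_def.mp hval
    omega
  exact absurd ((hRn_mem v).2 a b ⟨hav, hlt⟩ ⟨hbv, hblt⟩ hab) (lt_asymm hval)

lemma exists_kill (hCe : emptyPerm ∈ Av B₀) (hDe : emptyPerm ∈ Av B₁)
    {c d : ℕ} (hc : ∀ β ∈ B₀, β.1 ≤ c) (hd : ∀ δ ∈ B₁, δ.1 ≤ d)
    (hπ : π ∉ SquintLE (Av B₀) (Av B₁) (Av {perm12}) (Av {perm21})) :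
    ∃ W : Finset (Fin π.1), W.card ≤ 3 * c + d + 8 ∧ Kill π B₀ B₁ W := by
  classical
  have hC : IsPermClass (Av B₀) := isPermClass_av _
  have hD : IsPermClass (Av B₁) := isPermClass_av _
  rw [squintLE_iff hC hCe hD hDe] at hπ
  push_neg at hπ
  have hn : ∀ v, v ≤ π.1 → tL π (Av B₀) v ≤ hLn π v → tR π (Av B₁) v ≤ hRn π v →
      hRn π v < tL π (Av B₀) v := by
    intro v h1 h2 h3
    exact hπ v h1 h2 h3
  have h00 : TLok π (Av B₀) 0 0 := by
    apply patternIn_empty _ hCe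
    apply Set.eq_empty_iff_forall_notMem.mpr
    intro i hi
    exact absurd hi.1 (by omega)
  have hq00 : TRok π (Av B₁) π.1 0 := by
    apply patternIn_empty _ hDe
    apply Set.eq_empty_iff_forall_notMem.mpr
    intro i hi
    exact absurd hi.1 (not_le.mpr i.isLt)
  have hP0 : tL π (Av B₀) 0 ≤ hLn π 0 := le_trans (tL_le h00) (Nat.zero_le _)
  have hQn : tR π (Av B₁) π.1 ≤ hRn π π.1 := le_trans (tR_le hq00) (Nat.zero_le _)
  set SP : Set ℕ := {v | v ≤ π.1 ∧ tL π (Av B₀) v ≤ hLn π v} with hSP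
  have hpmem : sSup SP ∈ SP :=
    Nat.sSup_mem (s := SP) ⟨0, Nat.zero_le _, hP0⟩ ⟨π.1, fun x hx => hx.1⟩
  set p := sSup SP with hpdef
  obtain ⟨hpn, hpP⟩ := hpmem
  set SQ : Set ℕ := {v | tR π (Av B₁) v ≤ hRn π v} with hSQ
  have hqmem : sInf SQ ∈ SQ := Nat.sInf_mem ⟨π.1, hQn⟩
  set q := sInf SQ with hqdef
  have hqn : q ≤ π.1 := Nat.sInf_le (show π.1 ∈ SQ from hQn)
  have hqQ : tR π (Av B₁) q ≤ hRn π q := hqmem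
  have hRtopn : π.1 ≤ hRn π π.1 := by
    apply le_hRn _ (le_refl _)
    intro i j hi _ _
    exact absurd hi.1 (not_le.mpr i.isLt)
  have hpltn : p < π.1 := by
    rcases lt_or_eq_of_le hpn with h | h
    · exact h
    · exfalso
      have h1 : tL π (Av B₀) π.1 ≤ hLn π π.1 := h ▸ hpP
      have := hn π.1 (le_refl _) h1 hQn
      have := tL_le_top (π := π) hCe π.1
      omega
  have hq1 : 1 ≤ q := by
    by_contra h
    have hq0 : q = 0 := by omega
    have hq00' : tR π (Av B₁) 0 ≤ hRn π 0 := hq0 ▸ hqQ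
    have h1 := hn 0 (Nat.zero_le _) hP0 hq00'
    have h2 := tL_le h00
    omega
  have hnotP : hLn π (p + 1) < tL π (Av B₀) (p + 1) := by
    by_contra h
    have hmem : p + 1 ∈ SP := ⟨by omega, not_lt.mp h⟩
    have : p + 1 ≤ p := le_csSup ⟨π.1, fun x hx => hx.1⟩ hmem
    omega
  have hnotQ : hRn π (q - 1) < tR π (Av B₁) (q - 1) := by
    by_contra h
    have hmem : q - 1 ∈ SQ := not_lt.mp h
    have : q ≤ q - 1 := Nat.sInf_le hmem
    omega
  -- left boundary gadget
  have hgn : hLn π (p + 1) < π.1 := lt_of_lt_of_le hnotP (tL_le_top hCe _)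
  obtain ⟨β', hβ', hcopyL⟩ := copyOn_of_not_patternIn (not_TLok_of_lt hnotP)
  obtain ⟨gL, gLmono, gLmem, gLiso⟩ := hcopyL
  set WL := Finset.image gL Finset.univ with hWL
  have hWLmem : ∀ i, gL i ∈ WL := fun i => Finset.mem_image_of_mem _ (Finset.mem_univ i)
  have hWLprop : ∀ x ∈ WL, (x : ℕ) < p + 1 ∧ hLn π (p + 1) ≤ (π.2 x : ℕ) := by
    intro x hx
    rw [hWL] at hx
    obtain ⟨i, -, rfl⟩ := Finset.mem_image.mp hx
    exact gLmem i
  have hWLcard : WL.card ≤ c := by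
    refine le_trans Finset.card_image_le ?_
    simpa using hc β' hβ'
  obtain ⟨eL, fL, hefL, heLp, hfLp, hefLv, heLl, hfLl⟩ :=
    exists_pair_of_not_BLdec
      (not_BLdec_of_lt (show hLn π (p+1) < hLn π (p+1) + 1 by omega) (by omega))
  -- right boundary gadget
  have hg'n : hRn π (q - 1) < π.1 := lt_of_lt_of_le hnotQ (tR_le_top hDe _)
  obtain ⟨δ', hδ', hcopyR⟩ := copyOn_of_not_patternIn (not_TRok_of_lt hnotQ)
  obtain ⟨gR, gRmono, gRmem, gRiso⟩ := hcopyR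
  set WR := Finset.image gR Finset.univ with hWR
  have hWRmem : ∀ i, gR i ∈ WR := fun i => Finset.mem_image_of_mem _ (Finset.mem_univ i)
  have hWRprop : ∀ x ∈ WR, q - 1 ≤ (x : ℕ) ∧ hRn π (q - 1) ≤ (π.2 x : ℕ) := by
    intro x hx
    rw [hWR] at hx
    obtain ⟨i, -, rfl⟩ := Finset.mem_image.mp hx
    exact gRmem i
  have hWRcard : WR.card ≤ d := by
    refine le_trans Finset.card_image_le ?_
    simpa using hd δ' hδ'
  obtain ⟨aR, bR, habR, haRq, hbRq, habRv, haRl, hbRl⟩ :=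
    exists_pair_of_not_BRinc
      (not_BRinc_of_lt (show hRn π (q-1) < hRn π (q-1) + 1 by omega) (by omega))
  rcases le_or_gt q p with hqp | hqp
  · -- band case
    have hband : ∀ v, q ≤ v → v ≤ p → hRn π v < tL π (Av B₀) v := by
      intro v hv1 hv2
      refine hn v (le_trans hv2 hpn) ?_ ?_
      · exact le_trans (tL_mono hC hCe hv2) (le_trans hpP (hLn_anti hv2))
      · exact le_trans (tR_anti hD hDe hv1) (le_trans hqQ (hRn_mono hv1))
    have hb1 : hRn π q < tL π (Av B₀) q := hband q (le_refl _) hqp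
    have hh1n : hRn π q < π.1 := lt_of_lt_of_le hb1 (tL_le_top hCe _)
    obtain ⟨β₁, hβ₁, hcopy1⟩ := copyOn_of_not_patternIn (not_TLok_of_lt hb1)
    obtain ⟨g1, g1mono, g1mem, g1iso⟩ := hcopy1
    set W1 := Finset.image g1 Finset.univ with hW1
    have hW1mem : ∀ i, g1 i ∈ W1 := fun i => Finset.mem_image_of_mem _ (Finset.mem_univ i)
    have hW1prop : ∀ x ∈ W1, (x : ℕ) < q ∧ hRn π q ≤ (π.2 x : ℕ) := by
      intro x hx
      rw [hW1] at hx
      obtain ⟨i, -, rfl⟩ := Finset.mem_image.mp hx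
      exact g1mem i
    have hW1card : W1.card ≤ c := by
      refine le_trans Finset.card_image_le ?_
      simpa using hc β₁ hβ₁
    obtain ⟨a₁, b₁, hab₁, ha₁q, hv₁, ha₁h⟩ := pair_at_hRn hh1n
    rcases le_or_gt p (a₁ : ℕ) with ha₁p | ha₁p
    · -- one band gadget suffices
      set W := WL ∪ WR ∪ W1 ∪ {eL, fL, aR, bR, a₁, b₁} with hWdef
      have hWLsub : ∀ x ∈ WL, x ∈ W := by
        intro x hx; rw [hWdef]; simp [hx]
      have hWRsub : ∀ x ∈ WR, x ∈ W := by
        intro x hx; rw [hWdef]; simp [hx]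
      have hW1sub : ∀ x ∈ W1, x ∈ W := by
        intro x hx; rw [hWdef]; simp [hx]
      have heLW : eL ∈ W := by rw [hWdef]; simp
      have hfLW : fL ∈ W := by rw [hWdef]; simp
      have haRW : aR ∈ W := by rw [hWdef]; simp
      have hbRW : bR ∈ W := by rw [hWdef]; simp
      have ha₁W : a₁ ∈ W := by rw [hWdef]; simp
      have hb₁W : b₁ ∈ W := by rw [hWdef]; simp
      have hcopyL' : CopyOn π β' (↑WL : Set (Fin π.1)) :=
        ⟨gL, gLmono, fun i => hWLmem i, gLiso⟩
      have hcopyR' : CopyOn π δ' (↑WR : Set (Fin π.1)) :=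
        ⟨gR, gRmono, fun i => hWRmem i, gRiso⟩
      have hcopy1' : CopyOn π β₁ (↑W1 : Set (Fin π.1)) :=
        ⟨g1, g1mono, fun i => hW1mem i, g1iso⟩
      refine ⟨W, ?_, ?_⟩
      · have h6 : ({eL, fL, aR, bR, a₁, b₁} : Finset (Fin π.1)).card ≤ 6 := by
          apply card_insert_le'
          apply card_insert_le'
          apply card_insert_le'
          apply card_insert_le'
          apply card_insert_le'
          simp
        have hu1 := Finset.card_union_le WL WR
        have hu2 := Finset.card_union_le (WL ∪ WR) W1
        have hu3 := Finset.card_union_le (WL ∪ WR ∪ W1)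
          ({eL, fL, aR, bR, a₁, b₁} : Finset (Fin π.1))
        rw [hWdef]
        omega
      · intro w l r hlr
        by_cases hw1 : w ≤ q - 1
        · refine kill_branch_right (g := hRn π (q-1)) _ _ hδ' hcopyR' ?_ haRW hbRW habR
            (by omega) habRv (by omega)
          intro x hx
          obtain ⟨hx1, hx2⟩ := hWRprop x hx
          exact ⟨hWRsub x hx, by omega, hx2⟩
        · by_cases hw2 : w ≤ (a₁ : ℕ)
          · refine kill_branch_mid (h := hRn π q) _ _ hβ₁ hcopy1' hlr ?_ ha₁W hb₁W hab₁
              (by omega) hv₁ ha₁h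
            intro x hx
            obtain ⟨hx1, hx2⟩ := hW1prop x hx
            exact ⟨hW1sub x hx, by omega, hx2⟩
          · refine kill_branch_left (g := hLn π (p+1)) _ _ hβ' hcopyL' ?_ heLW hfLW hefL
              (by omega) hefLv (by omega)
            intro x hx
            obtain ⟨hx1, hx2⟩ := hWLprop x hx
            exact ⟨hWLsub x hx, by omega, hx2⟩
    · -- need a second band gadget
      have hb2 : hRn π ((a₁ : ℕ) + 1) < tL π (Av B₀) ((a₁ : ℕ) + 1) :=
        hband _ (by omega) (by omega)
      have hh2n : hRn π ((a₁ : ℕ) + 1) < π.1 := lt_of_lt_of_le hb2 (tL_le_top hCe _)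
      obtain ⟨β₂, hβ₂, hcopy2⟩ := copyOn_of_not_patternIn (not_TLok_of_lt hb2)
      obtain ⟨g2, g2mono, g2mem, g2iso⟩ := hcopy2
      set W2 := Finset.image g2 Finset.univ with hW2
      have hW2mem : ∀ i, g2 i ∈ W2 := fun i => Finset.mem_image_of_mem _ (Finset.mem_univ i)
      have hW2prop : ∀ x ∈ W2, (x : ℕ) < (a₁ : ℕ) + 1 ∧
          hRn π ((a₁ : ℕ) + 1) ≤ (π.2 x : ℕ) := by
        intro x hx
        rw [hW2] at hx
        obtain ⟨i, -, rfl⟩ := Finset.mem_image.mp hx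
        exact g2mem i
      have hW2card : W2.card ≤ c := by
        refine le_trans Finset.card_image_le ?_
        simpa using hc β₂ hβ₂
      obtain ⟨a₂, b₂, hab₂, ha₂w, hv₂, ha₂h⟩ := pair_at_hRn hh2n
      have hpa₂ : p ≤ (a₂ : ℕ) := by
        by_contra hlt
        push_neg at hlt
        have hh12 : hRn π q ≤ hRn π ((a₁ : ℕ) + 1) := hRn_mono (by omega)
        have hne : (π.2 a₁ : ℕ) ≠ (π.2 a₂ : ℕ) := by
          intro heq
          have ha : a₁ = a₂ := π.2.injective (Fin.ext heq)
          have : (a₁ : ℕ) = (a₂ : ℕ) := by rw [ha]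
          omega
        have hbandp : hRn π p < tL π (Av B₀) p := hband p hqp (le_refl _)
        have hhpn : hRn π p < π.1 := lt_of_lt_of_le hbandp (tL_le_top hCe _)
        have h2ltp : (π.2 a₂ : ℕ) < hRn π p := by
          have hle : hRn π ((a₁ : ℕ) + 1) ≤ hRn π p := hRn_mono (by omega)
          rcases lt_or_eq_of_le hle with h | h
          · omega
          · exfalso
            obtain ⟨a₃, b₃, hab₃, ha₃p, hv₃, ha₃h⟩ := pair_at_hRn hhpn
            have ha : a₂ = a₃ := π.2.injective (Fin.ext (by omega))
            have : (a₂ : ℕ) = (a₃ : ℕ) := by rw [ha]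
            omega
        have hBLp : BLdec π p (hRn π p) := by
          refine BLdec_mono_l (hLn_mem p).2 ?_
          omega
        have hcontra := hBLp a₁ a₂ ⟨by omega, by omega⟩ ⟨by omega, by omega⟩
          (Fin.lt_def.mpr (by omega))
        have := Fin.lt_def.mp hcontra
        omega
      set W := WL ∪ WR ∪ W1 ∪ W2 ∪ {eL, fL, aR, bR, a₁, b₁, a₂, b₂} with hWdef
      have hWLsub : ∀ x ∈ WL, x ∈ W := by
        intro x hx; rw [hWdef]; simp [hx]
      have hWRsub : ∀ x ∈ WR, x ∈ W := by
        intro x hx; rw [hWdef]; simp [hx]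
      have hW1sub : ∀ x ∈ W1, x ∈ W := by
        intro x hx; rw [hWdef]; simp [hx]
      have hW2sub : ∀ x ∈ W2, x ∈ W := by
        intro x hx; rw [hWdef]; simp [hx]
      have heLW : eL ∈ W := by rw [hWdef]; simp
      have hfLW : fL ∈ W := by rw [hWdef]; simp
      have haRW : aR ∈ W := by rw [hWdef]; simp
      have hbRW : bR ∈ W := by rw [hWdef]; simp
      have ha₁W : a₁ ∈ W := by rw [hWdef]; simp
      have hb₁W : b₁ ∈ W := by rw [hWdef]; simp
      have ha₂W : a₂ ∈ W := by rw [hWdef]; simp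
      have hb₂W : b₂ ∈ W := by rw [hWdef]; simp
      have hcopyL' : CopyOn π β' (↑WL : Set (Fin π.1)) :=
        ⟨gL, gLmono, fun i => hWLmem i, gLiso⟩
      have hcopyR' : CopyOn π δ' (↑WR : Set (Fin π.1)) :=
        ⟨gR, gRmono, fun i => hWRmem i, gRiso⟩
      have hcopy1' : CopyOn π β₁ (↑W1 : Set (Fin π.1)) :=
        ⟨g1, g1mono, fun i => hW1mem i, g1iso⟩
      have hcopy2' : CopyOn π β₂ (↑W2 : Set (Fin π.1)) :=
        ⟨g2, g2mono, fun i => hW2mem i, g2iso⟩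
      refine ⟨W, ?_, ?_⟩
      · have h8 : ({eL, fL, aR, bR, a₁, b₁, a₂, b₂} : Finset (Fin π.1)).card ≤ 8 := by
          apply card_insert_le'
          apply card_insert_le'
          apply card_insert_le'
          apply card_insert_le'
          apply card_insert_le'
          apply card_insert_le'
          apply card_insert_le'
          simp
        have hu1 := Finset.card_union_le WL WR
        have hu2 := Finset.card_union_le (WL ∪ WR) W1
        have hu3 := Finset.card_union_le (WL ∪ WR ∪ W1) W2
        have hu4 := Finset.card_union_le (WL ∪ WR ∪ W1 ∪ W2)
          ({eL, fL, aR, bR, a₁, b₁, a₂, b₂} : Finset (Fin π.1))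
        rw [hWdef]
        omega
      · intro w l r hlr
        by_cases hw1 : w ≤ q - 1
        · refine kill_branch_right (g := hRn π (q-1)) _ _ hδ' hcopyR' ?_ haRW hbRW habR
            (by omega) habRv (by omega)
          intro x hx
          obtain ⟨hx1, hx2⟩ := hWRprop x hx
          exact ⟨hWRsub x hx, by omega, hx2⟩
        · by_cases hw2 : w ≤ (a₁ : ℕ)
          · refine kill_branch_mid (h := hRn π q) _ _ hβ₁ hcopy1' hlr ?_ ha₁W hb₁W hab₁
              (by omega) hv₁ ha₁h
            intro x hx
            obtain ⟨hx1, hx2⟩ := hW1prop x hx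
            exact ⟨hW1sub x hx, by omega, hx2⟩
          · by_cases hw3 : w ≤ (a₂ : ℕ)
            · refine kill_branch_mid (h := hRn π ((a₁ : ℕ) + 1)) _ _ hβ₂ hcopy2' hlr ?_
                ha₂W hb₂W hab₂ (by omega) hv₂ ha₂h
              intro x hx
              obtain ⟨hx1, hx2⟩ := hW2prop x hx
              exact ⟨hW2sub x hx, by omega, hx2⟩
            · refine kill_branch_left (g := hLn π (p+1)) _ _ hβ' hcopyL' ?_ heLW hfLW hefL
                (by omega) hefLv (by omega)
              intro x hx
              obtain ⟨hx1, hx2⟩ := hWLprop x hx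
              exact ⟨hWLsub x hx, by omega, hx2⟩
  · -- p < q : no band
    set W := WL ∪ WR ∪ {eL, fL, aR, bR} with hWdef
    have hWLsub : ∀ x ∈ WL, x ∈ W := by
      intro x hx; rw [hWdef]; simp [hx]
    have hWRsub : ∀ x ∈ WR, x ∈ W := by
      intro x hx; rw [hWdef]; simp [hx]
    have heLW : eL ∈ W := by rw [hWdef]; simp
    have hfLW : fL ∈ W := by rw [hWdef]; simp
    have haRW : aR ∈ W := by rw [hWdef]; simp
    have hbRW : bR ∈ W := by rw [hWdef]; simp
    have hcopyL' : CopyOn π β' (↑WL : Set (Fin π.1)) :=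
      ⟨gL, gLmono, fun i => hWLmem i, gLiso⟩
    have hcopyR' : CopyOn π δ' (↑WR : Set (Fin π.1)) :=
      ⟨gR, gRmono, fun i => hWRmem i, gRiso⟩
    refine ⟨W, ?_, ?_⟩
    · have h4 : ({eL, fL, aR, bR} : Finset (Fin π.1)).card ≤ 4 := by
        apply card_insert_le'
        apply card_insert_le'
        apply card_insert_le'
        simp
      have hu1 := Finset.card_union_le WL WR
      have hu2 := Finset.card_union_le (WL ∪ WR) ({eL, fL, aR, bR} : Finset (Fin π.1))
      rw [hWdef]
      omega
    · intro w l r hlr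
      by_cases hw1 : w ≤ q - 1
      · refine kill_branch_right (g := hRn π (q-1)) _ _ hδ' hcopyR' ?_ haRW hbRW habR
          (by omega) habRv (by omega)
        intro x hx
        obtain ⟨hx1, hx2⟩ := hWRprop x hx
        exact ⟨hWRsub x hx, by omega, hx2⟩
      · refine kill_branch_left (g := hLn π (p+1)) _ _ hβ' hcopyL' ?_ heLW hfLW hefL
          (by omega) hefLv (by omega)
        intro x hx
        obtain ⟨hx1, hx2⟩ := hWLprop x hx
        exact ⟨hWLsub x hx, by omega, hx2⟩

end ExistsKill

section SquintFB
open Set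

lemma squintLE_fb {B₀ B₁ : Set Perm'} (hB₀ : B₀.Finite) (hB₁ : B₁.Finite)
    (hCe : emptyPerm ∈ Av B₀) (hDe : emptyPerm ∈ Av B₁) :
    FinitelyBased (SquintLE (Av B₀) (Av B₁) (Av {perm12}) (Av {perm21})) := by
  classical
  set c := hB₀.toFinset.sup (fun β => β.1) with hcdef
  set d := hB₁.toFinset.sup (fun δ => δ.1) with hddef
  have hc : ∀ β ∈ B₀, β.1 ≤ c := fun β hβ => Finset.le_sup (hB₀.mem_toFinset.mpr hβ)
  have hd : ∀ δ ∈ B₁, δ.1 ≤ d := fun δ hδ => Finset.le_sup (hB₁.mem_toFinset.mpr hδ)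
  set N := 3 * c + d + 8 with hNdef
  refine ⟨{β : Perm' | β.1 ≤ N ∧ β ∉ SquintLE (Av B₀) (Av B₁) (Av {perm12}) (Av {perm21})},
    Set.Finite.subset (finite_bounded_perms N) (fun β hβ => hβ.1), ?_⟩
  ext π
  constructor
  · intro hπ β hβ hcon
    exact hβ.2 (mem_squintLE_of_contains (isPermClass_av _) (isPermClass_av _) hcon hπ)
  · intro hπ
    by_contra hnot
    obtain ⟨W, hWcard, hWkill⟩ := exists_kill hCe hDe hc hd hnot
    obtain ⟨σ, hσcard, hσpat⟩ := exists_patternOn π (↑W)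
    have hσS := not_squintLE_of_kill hWkill hσpat
    have hσN : σ.1 ≤ N := by
      rw [hσcard, Finset.toFinset_coe]
      omega
    have hcon : Contains σ π := by
      obtain ⟨f, fm, fr, fi⟩ := hσpat
      exact ⟨f, fm, fi⟩
    exact hπ σ ⟨hσN, hσS⟩ hcon

end SquintFB

section Reversal
open Set

/-- Positional reversal of a permutation. -/
def revp (ρ : Perm') : Perm' := ⟨ρ.1, Fin.revPerm.trans ρ.2⟩

lemma revp_revp (ρ : Perm') : revp (revp ρ) = ρ := by
  have h : (revp (revp ρ)).2 = ρ.2 := by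
    apply Equiv.ext
    intro i
    show ρ.2 i.rev.rev = ρ.2 i
    rw [Fin.rev_rev]
  exact Sigma.ext rfl (heq_of_eq h)

lemma contains_revp {σ ρ : Perm'} (h : Contains σ ρ) : Contains (revp σ) (revp ρ) := by
  obtain ⟨f, fmono, fiso⟩ := h
  refine ⟨fun i => (f i.rev).rev, ?_, ?_⟩
  · intro a b hab
    exact Fin.rev_lt_rev.mpr (fmono (Fin.rev_lt_rev.mpr hab))
  · intro i j
    show σ.2 i.rev < σ.2 j.rev ↔ ρ.2 ((f i.rev).rev.rev) < ρ.2 ((f j.rev).rev.rev)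
    rw [Fin.rev_rev, Fin.rev_rev]
    exact fiso i.rev j.rev

/-- Reversal of a set of permutations. -/
def revSet (X : Set Perm') : Set Perm' := {ρ | revp ρ ∈ X}

lemma revSet_revSet (X : Set Perm') : revSet (revSet X) = X := by
  ext ρ
  show revp (revp ρ) ∈ X ↔ ρ ∈ X
  rw [revp_revp]

lemma av_revSet (B : Set Perm') : Av (revSet B) = revSet (Av B) := by
  ext ρ
  constructor
  · intro h β hβ hcon
    refine h (revp β) ?_ ?_
    · show revp (revp β) ∈ B
      rwa [revp_revp]
    · have := contains_revp hcon
      rwa [revp_revp] at this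
  · intro h β hβ hcon
    exact h (revp β) hβ (contains_revp hcon)

lemma finite_revSet {B : Set Perm'} (h : B.Finite) : (revSet B).Finite := by
  have hsub : revSet B ⊆ revp '' B := fun ρ hρ => ⟨revp ρ, hρ, revp_revp ρ⟩
  exact (h.image _).subset hsub

lemma fb_revSet {X : Set Perm'} (h : FinitelyBased X) : FinitelyBased (revSet X) := by
  obtain ⟨B, hBfin, rfl⟩ := h
  exact ⟨revSet B, finite_revSet hBfin, (av_revSet B).symm⟩

lemma revp_perm12 : revp perm12 = perm21 := by
  have h : (Fin.revPerm.trans (Equiv.refl (Fin 2))) = Equiv.swap (0 : Fin 2) 1 := by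
    apply Equiv.ext
    decide
  exact congrArg (fun e : Equiv.Perm (Fin 2) => (⟨2, e⟩ : Perm')) h

lemma revp_perm21 : revp perm21 = perm12 := by
  have h : (Fin.revPerm.trans (Equiv.swap (0 : Fin 2) 1)) = Equiv.refl (Fin 2) := by
    apply Equiv.ext
    decide
  exact congrArg (fun e : Equiv.Perm (Fin 2) => (⟨2, e⟩ : Perm')) h

lemma revp_empty : revp emptyPerm = emptyPerm := by
  have h : (revp emptyPerm).2 = emptyPerm.2 := by
    apply Equiv.ext
    intro i
    exact i.elim0
  exact Sigma.ext rfl (heq_of_eq h)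

lemma revSet_singleton_perm21 : revSet {perm21} = {perm12} := by
  ext σ
  simp only [revSet, Set.mem_singleton_iff, Set.mem_setOf_eq]
  constructor
  · intro h
    have := congrArg revp h
    rwa [revp_revp, revp_perm21] at this
  · rintro rfl
    exact revp_perm12

lemma revSet_singleton_perm12 : revSet {perm12} = {perm21} := by
  ext σ
  simp only [revSet, Set.mem_singleton_iff, Set.mem_setOf_eq]
  constructor
  · intro h
    have := congrArg revp h
    rwa [revp_revp, revp_perm12] at this
  · rintro rfl
    exact revp_perm21

lemma revSet_av21 : revSet (Av {perm21}) = Av {perm12} := by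
  rw [← av_revSet, revSet_singleton_perm21]

lemma revSet_av12 : revSet (Av {perm12}) = Av {perm21} := by
  rw [← av_revSet, revSet_singleton_perm12]

lemma patternIn_revp {ρ : Perm'} {S : Set (Fin ρ.1)} {X : Set Perm'}
    (h : PatternIn ρ S X) :
    PatternIn (revp ρ) {i : Fin ρ.1 | i.rev ∈ S} (revSet X) := by
  obtain ⟨σ, hσX, e, emono, erange, eiso⟩ := h
  refine ⟨revp σ, ?_, fun i => (e i.rev).rev, ?_, ?_, ?_⟩
  · show revp (revp σ) ∈ X
    rwa [revp_revp]
  · intro a b hab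
    exact Fin.rev_lt_rev.mpr (emono (Fin.rev_lt_rev.mpr hab))
  · ext x
    constructor
    · rintro ⟨i, rfl⟩
      show (e i.rev).rev.rev ∈ S
      rw [Fin.rev_rev]
      exact erange ▸ Set.mem_range_self _
    · intro hx
      have hx' : x.rev ∈ Set.range e := erange ▸ hx
      obtain ⟨j, hj⟩ := hx'
      refine ⟨j.rev, ?_⟩
      show (e j.rev.rev).rev = x
      rw [Fin.rev_rev, hj]
      exact Fin.rev_rev x
  · intro i j
    show σ.2 i.rev < σ.2 j.rev ↔ ρ.2 ((e i.rev).rev.rev) < ρ.2 ((e j.rev).rev.rev)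
    rw [Fin.rev_rev, Fin.rev_rev]
    exact eiso i.rev j.rev

lemma squintGE_revp {A B : Set Perm'} {ρ : Perm'}
    (h : ρ ∈ SquintGE A B (Av {perm12}) (Av {perm21})) :
    revp ρ ∈ SquintLE (revSet B) (revSet A) (Av {perm12}) (Av {perm21}) := by
  obtain ⟨v, l, r, hv, hl, hr, hrl, h1, h2, h3, h4⟩ := h
  refine ⟨ρ.1 - v, r, l, Nat.sub_le ρ.1 v, hr, hl, hrl, ?_, ?_, ?_, ?_⟩
  · -- top-left of rev = top-right of ρ (class B)
    have hc := patternIn_revp h3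
    have he : {i : Fin ρ.1 | i.rev ∈ {j : Fin ρ.1 | v ≤ (j : ℕ) ∧ r ≤ (ρ.2 j : ℕ)}} =
        {i : Fin ρ.1 | (i : ℕ) < ρ.1 - v ∧ r ≤ ((revp ρ).2 i : ℕ)} := by
      ext i
      simp only [Set.mem_setOf_eq]
      have hiv : (i.rev : ℕ) = ρ.1 - ((i : ℕ) + 1) := Fin.val_rev i
      have hilt := i.isLt
      have hval : ((revp ρ).2 i : ℕ) = (ρ.2 i.rev : ℕ) := rfl
      constructor
      · rintro ⟨hp, hq⟩
        exact ⟨by omega, by omega⟩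
      · rintro ⟨hp, hq⟩
        exact ⟨by omega, by omega⟩
    exact cast (congrArg (fun S => PatternIn (revp ρ) S _) he) hc
  · -- bottom-left of rev = bottom-right of ρ (Av 21 → Av 12)
    have hc := patternIn_revp h4
    rw [revSet_av21] at hc
    have he : {i : Fin ρ.1 | i.rev ∈ {j : Fin ρ.1 | v ≤ (j : ℕ) ∧ (ρ.2 j : ℕ) < r}} =
        {i : Fin ρ.1 | (i : ℕ) < ρ.1 - v ∧ ((revp ρ).2 i : ℕ) < r} := by
      ext i
      simp only [Set.mem_setOf_eq]
      have hiv : (i.rev : ℕ) = ρ.1 - ((i : ℕ) + 1) := Fin.val_rev i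
      have hilt := i.isLt
      have hval : ((revp ρ).2 i : ℕ) = (ρ.2 i.rev : ℕ) := rfl
      constructor
      · rintro ⟨hp, hq⟩
        exact ⟨by omega, by omega⟩
      · rintro ⟨hp, hq⟩
        exact ⟨by omega, by omega⟩
    exact cast (congrArg (fun S => PatternIn (revp ρ) S _) he) hc
  · -- top-right of rev = top-left of ρ (class A)
    have hc := patternIn_revp h1
    have he : {i : Fin ρ.1 | i.rev ∈ {j : Fin ρ.1 | (j : ℕ) < v ∧ l ≤ (ρ.2 j : ℕ)}} =
        {i : Fin ρ.1 | ρ.1 - v ≤ (i : ℕ) ∧ l ≤ ((revp ρ).2 i : ℕ)} := by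
      ext i
      simp only [Set.mem_setOf_eq]
      have hiv : (i.rev : ℕ) = ρ.1 - ((i : ℕ) + 1) := Fin.val_rev i
      have hilt := i.isLt
      have hval : ((revp ρ).2 i : ℕ) = (ρ.2 i.rev : ℕ) := rfl
      constructor
      · rintro ⟨hp, hq⟩
        exact ⟨by omega, by omega⟩
      · rintro ⟨hp, hq⟩
        exact ⟨by omega, by omega⟩
    exact cast (congrArg (fun S => PatternIn (revp ρ) S _) he) hc
  · -- bottom-right of rev = bottom-left of ρ (Av 12 → Av 21)
    have hc := patternIn_revp h2
    rw [revSet_av12] at hc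
    have he : {i : Fin ρ.1 | i.rev ∈ {j : Fin ρ.1 | (j : ℕ) < v ∧ (ρ.2 j : ℕ) < l}} =
        {i : Fin ρ.1 | ρ.1 - v ≤ (i : ℕ) ∧ ((revp ρ).2 i : ℕ) < l} := by
      ext i
      simp only [Set.mem_setOf_eq]
      have hiv : (i.rev : ℕ) = ρ.1 - ((i : ℕ) + 1) := Fin.val_rev i
      have hilt := i.isLt
      have hval : ((revp ρ).2 i : ℕ) = (ρ.2 i.rev : ℕ) := rfl
      constructor
      · rintro ⟨hp, hq⟩
        exact ⟨by omega, by omega⟩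
      · rintro ⟨hp, hq⟩
        exact ⟨by omega, by omega⟩
    exact cast (congrArg (fun S => PatternIn (revp ρ) S _) he) hc

lemma squintLE_revp {A B : Set Perm'} {ρ : Perm'}
    (h : ρ ∈ SquintLE A B (Av {perm12}) (Av {perm21})) :
    revp ρ ∈ SquintGE (revSet B) (revSet A) (Av {perm12}) (Av {perm21}) := by
  obtain ⟨v, l, r, hv, hl, hr, hlr, h1, h2, h3, h4⟩ := h
  refine ⟨ρ.1 - v, r, l, Nat.sub_le ρ.1 v, hr, hl, hlr, ?_, ?_, ?_, ?_⟩
  · have hc := patternIn_revp h3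
    have he : {i : Fin ρ.1 | i.rev ∈ {j : Fin ρ.1 | v ≤ (j : ℕ) ∧ r ≤ (ρ.2 j : ℕ)}} =
        {i : Fin ρ.1 | (i : ℕ) < ρ.1 - v ∧ r ≤ ((revp ρ).2 i : ℕ)} := by
      ext i
      simp only [Set.mem_setOf_eq]
      have hiv : (i.rev : ℕ) = ρ.1 - ((i : ℕ) + 1) := Fin.val_rev i
      have hilt := i.isLt
      have hval : ((revp ρ).2 i : ℕ) = (ρ.2 i.rev : ℕ) := rfl
      constructor
      · rintro ⟨hp, hq⟩
        exact ⟨by omega, by omega⟩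
      · rintro ⟨hp, hq⟩
        exact ⟨by omega, by omega⟩
    exact cast (congrArg (fun S => PatternIn (revp ρ) S _) he) hc
  · have hc := patternIn_revp h4
    rw [revSet_av21] at hc
    have he : {i : Fin ρ.1 | i.rev ∈ {j : Fin ρ.1 | v ≤ (j : ℕ) ∧ (ρ.2 j : ℕ) < r}} =
        {i : Fin ρ.1 | (i : ℕ) < ρ.1 - v ∧ ((revp ρ).2 i : ℕ) < r} := by
      ext i
      simp only [Set.mem_setOf_eq]
      have hiv : (i.rev : ℕ) = ρ.1 - ((i : ℕ) + 1) := Fin.val_rev i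
      have hilt := i.isLt
      have hval : ((revp ρ).2 i : ℕ) = (ρ.2 i.rev : ℕ) := rfl
      constructor
      · rintro ⟨hp, hq⟩
        exact ⟨by omega, by omega⟩
      · rintro ⟨hp, hq⟩
        exact ⟨by omega, by omega⟩
    exact cast (congrArg (fun S => PatternIn (revp ρ) S _) he) hc
  · have hc := patternIn_revp h1
    have he : {i : Fin ρ.1 | i.rev ∈ {j : Fin ρ.1 | (j : ℕ) < v ∧ l ≤ (ρ.2 j : ℕ)}} =
        {i : Fin ρ.1 | ρ.1 - v ≤ (i : ℕ) ∧ l ≤ ((revp ρ).2 i : ℕ)} := by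
      ext i
      simp only [Set.mem_setOf_eq]
      have hiv : (i.rev : ℕ) = ρ.1 - ((i : ℕ) + 1) := Fin.val_rev i
      have hilt := i.isLt
      have hval : ((revp ρ).2 i : ℕ) = (ρ.2 i.rev : ℕ) := rfl
      constructor
      · rintro ⟨hp, hq⟩
        exact ⟨by omega, by omega⟩
      · rintro ⟨hp, hq⟩
        exact ⟨by omega, by omega⟩
    exact cast (congrArg (fun S => PatternIn (revp ρ) S _) he) hc
  · have hc := patternIn_revp h2
    rw [revSet_av12] at hc
    have he : {i : Fin ρ.1 | i.rev ∈ {j : Fin ρ.1 | (j : ℕ) < v ∧ (ρ.2 j : ℕ) < l}} =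
        {i : Fin ρ.1 | ρ.1 - v ≤ (i : ℕ) ∧ ((revp ρ).2 i : ℕ) < l} := by
      ext i
      simp only [Set.mem_setOf_eq]
      have hiv : (i.rev : ℕ) = ρ.1 - ((i : ℕ) + 1) := Fin.val_rev i
      have hilt := i.isLt
      have hval : ((revp ρ).2 i : ℕ) = (ρ.2 i.rev : ℕ) := rfl
      constructor
      · rintro ⟨hp, hq⟩
        exact ⟨by omega, by omega⟩
      · rintro ⟨hp, hq⟩
        exact ⟨by omega, by omega⟩
    exact cast (congrArg (fun S => PatternIn (revp ρ) S _) he) hc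

lemma squintGE_eq_revSet (A B : Set Perm') :
    SquintGE A B (Av {perm12}) (Av {perm21}) =
      revSet (SquintLE (revSet B) (revSet A) (Av {perm12}) (Av {perm21})) := by
  ext ρ
  constructor
  · intro h
    exact squintGE_revp h
  · intro h
    have h2 := squintLE_revp (A := revSet B) (B := revSet A) h
    rwa [revp_revp, revSet_revSet, revSet_revSet] at h2

end Reversal

/-- For finitely based permutation classes `C`, `D`, the grid class
`Grid(C,D;Av 12,Av 21)` is finitely based. -/
theorem grid2x2_decr_incr_finitelyBased (C D : Set Perm')
    (hC : IsPermClass C) (hD : IsPermClass D)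
    (hCfb : FinitelyBased C) (hDfb : FinitelyBased D) :
    FinitelyBased (GridClass C D (Av {perm12}) (Av {perm21})) := by
  classical
  by_cases hCe : emptyPerm ∈ C
  · by_cases hDe : emptyPerm ∈ D
    · -- main case
      obtain ⟨B₀, hB₀fin, rfl⟩ := hCfb
      obtain ⟨B₁, hB₁fin, rfl⟩ := hDfb
      rw [grid_eq_squint_inter hC hCe hD hDe]
      have h1 : FinitelyBased (SquintLE (Av B₀) (Av B₁) (Av {perm12}) (Av {perm21})) :=
        squintLE_fb hB₀fin hB₁fin hCe hDe
      have h2 : FinitelyBased (SquintGE (Av B₀) (Av B₁) (Av {perm12}) (Av {perm21})) := by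
        rw [squintGE_eq_revSet]
        apply fb_revSet
        rw [← av_revSet, ← av_revSet]
        apply squintLE_fb (finite_revSet hB₁fin) (finite_revSet hB₀fin)
        · rw [av_revSet]
          show revp emptyPerm ∈ Av B₁
          rwa [revp_empty]
        · rw [av_revSet]
          show revp emptyPerm ∈ Av B₀
          rwa [revp_empty]
      obtain ⟨Ba, hBa, hEa⟩ := h1
      obtain ⟨Bb, hBb, hEb⟩ := h2
      exact ⟨Ba ∪ Bb, hBa.union hBb, by rw [hEa, hEb, av_union]⟩
    · -- D contains no permutation at all
      have hDempty : D = ∅ := by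
        ext σ
        simp only [Set.mem_empty_iff_false, iff_false]
        intro hσ
        exact hDe (hD σ hσ emptyPerm (contains_empty σ))
      refine ⟨{emptyPerm}, Set.finite_singleton _, ?_⟩
      ext π
      constructor
      · rintro ⟨v, h, hv, hh, h1, h2, h3, h4⟩
        obtain ⟨σ, hσ, -⟩ := h2
        rw [hDempty] at hσ
        exact absurd hσ (Set.notMem_empty σ)
      · intro hπ
        exact absurd (contains_empty π) (hπ emptyPerm rfl)
  · have hCempty : C = ∅ := by
      ext σ
      simp only [Set.mem_empty_iff_false, iff_false]
      intro hσ
      exact hCe (hC σ hσ emptyPerm (contains_empty σ))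
    refine ⟨{emptyPerm}, Set.finite_singleton _, ?_⟩
    ext π
    constructor
    · rintro ⟨v, h, hv, hh, h1, h2, h3, h4⟩
      obtain ⟨σ, hσ, -⟩ := h1
      rw [hCempty] at hσ
      exact absurd hσ (Set.notMem_empty σ)
    · intro hπ
      exact absurd (contains_empty π) (hπ emptyPerm rfl)
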